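/- Let γ be a 'left shape': a graph with distinguished subsets U_γ, V_γ such that V_γ is the unique minimum vertex separator between U_γ and V_γ and every vertex is connected to U_γ. Then there exists a set Res(γ) ⊆ E(γ) of at most 2|V(γ)| edges such that, for any subset F ⊆ E(γ)∖Res(γ), the graph (V(γ), E(γ)∖F) still has V_γ as its unique minimum vertex separator between U_γ and V_γ and every vertex connected to U_γ. -/

import Mathlib

open Classical

/-- `S` is a vertex separator between `A` and `B` in `G`. -/
def IsSeparator {V : Type*} (G : SimpleGraph V) (A B S : Set V) : Prop :=
  ∀ a ∈ A, ∀ b ∈ B, ∀ w : G.Walk a b, ∃ x ∈ w.support, x ∈ S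

/-- `γ` with distinguished subsets `U`, `W` is a left shape: `W` is the unique
minimum vertex separator between `U` and `W`, and every vertex is connected to `U`. -/
def IsLeftShape {V : Type*} (G : SimpleGraph V) (U W : Set V) : Prop :=
  IsSeparator G U W W ∧
  (∀ S : Set V, IsSeparator G U W S → W.ncard ≤ S.ncard) ∧
  (∀ S : Set V, IsSeparator G U W S → S.ncard = W.ncard → S = W) ∧
  (∀ v : V, ∃ u ∈ U, G.Reachable v u)

namespace Stmt19

variable {V : Type*}

/-! ### Iteration of partial functions -/

section PFn

variable (g : V → Option V)

def it : ℕ → V → Option V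
  | 0, v => some v
  | n+1, v => (it n v).bind g

variable {g}

lemma it_zero (v : V) : it g 0 v = some v := rfl

lemma it_succ (n : ℕ) (v : V) : it g (n+1) v = (it g n v).bind g := rfl

lemma it_add (m n : ℕ) (v : V) :
    it g (m + n) v = (it g m v).bind (fun x => it g n x) := by
  induction n with
  | zero => cases h : it g m v <;> simp [it, h]
  | succ n ih =>
      have : m + (n+1) = (m + n) + 1 := rfl
      rw [this, it_succ, ih]
      cases h : it g m v with
      | none => simp
      | some x => simp [it_succ]

lemma it_one (v : V) : it g 1 v = g v := by
  cases h : g v <;> simp [it, h]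

lemma it_none_succ {n : ℕ} {v : V} (h : it g n v = none) : it g (n+1) v = none := by
  rw [it_succ, h]; rfl

lemma it_succ' (n : ℕ) (v : V) : it g (n+1) v = (g v).bind (fun x => it g n x) := by
  have : (1 : ℕ) + n = n + 1 := by omega
  rw [← this, it_add, it_one]


lemma it_succ_elim {g : V → Option V} {n : ℕ} {v x : V} (h : it g (n+1) v = some x) :
    ∃ y, it g n v = some y ∧ g y = some x := by
  rw [it_succ] at h
  cases hj : it g n v with
  | none => rw [hj] at h; simp at h
  | some y => rw [hj] at h; simp at h; exact ⟨y, rfl, h⟩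

lemma it_succ_intro {g : V → Option V} {n : ℕ} {v y x : V} (h1 : it g n v = some y)
    (h2 : g y = some x) : it g (n+1) v = some x := by
  rw [it_succ, h1]; simpa using h2

lemma it_succ_elim' {g : V → Option V} {n : ℕ} {v x : V} (h : it g (n+1) v = some x) :
    ∃ y, g v = some y ∧ it g n y = some x := by
  rw [it_succ'] at h
  cases hj : g v with
  | none => rw [hj] at h; simp at h
  | some y => rw [hj] at h; simp at h; exact ⟨y, rfl, h⟩

lemma it_succ_intro' {g : V → Option V} {n : ℕ} {v y x : V} (h1 : g v = some y)
    (h2 : it g n y = some x) : it g (n+1) v = some x := by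
  rw [it_succ', h1]; simpa using h2

lemma it_trans {g : V → Option V} {m n : ℕ} {v x y : V} (h1 : it g m v = some x)
    (h2 : it g n x = some y) : it g (m+n) v = some y := by
  rw [it_add, h1]; simpa using h2

/-- partial injectivity -/
def PInj (g : V → Option V) : Prop := ∀ a b x, g a = some x → g b = some x → a = b

/-- being on a cycle of `g` -/
def OnCyc (g : V → Option V) (v : V) : Prop := ∃ m, 0 < m ∧ it g m v = some v

lemma onCyc_out {v : V} (h : OnCyc g v) : ∃ y, g v = some y ∧ OnCyc g y := by
  obtain ⟨m, hm, hit⟩ := h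
  obtain ⟨m', rfl⟩ : ∃ m', m = m' + 1 := ⟨m - 1, by omega⟩
  -- it g (m'+1) v = some v ; use it_succ' to peel first step
  rw [it_succ'] at hit
  cases hg : g v with
  | none => rw [hg] at hit; simp at hit
  | some y =>
      rw [hg] at hit; simp at hit
      refine ⟨y, rfl, ⟨m' + 1, by omega, ?_⟩⟩
      have : it g (m' + 1) y = (it g m' y).bind g := it_succ _ _
      rw [this, hit]; simp [hg]

lemma onCyc_of_mem_cycle {v x : V} (h : OnCyc g v) {i : ℕ} (hx : it g i v = some x) :
    OnCyc g x := by
  induction i generalizing v with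
  | zero => simp [it] at hx; subst hx; exact h
  | succ i ih =>
      rw [it_succ'] at hx
      obtain ⟨y, hy, hcy⟩ := onCyc_out h
      rw [hy] at hx; simp at hx
      exact ih hcy hx

lemma descend (hg : PInj g) {i j : ℕ} {v x : V}
    (h1 : it g i v = some x) (h2 : it g j v = some x) (hij : i ≤ j) :
    it g (j - i) v = some v := by
  induction i generalizing j x with
  | zero =>
      simp [it] at h1; subst h1
      simpa using h2
  | succ i ih =>
      obtain ⟨j', rfl⟩ : ∃ j', j = j' + 1 := ⟨j - 1, by omega⟩
      rw [it_succ] at h1 h2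
      cases ha : it g i v with
      | none => rw [ha] at h1; simp at h1
      | some a =>
        cases hb : it g j' v with
        | none => rw [hb] at h2; simp at h2
        | some b =>
            rw [ha] at h1; rw [hb] at h2; simp at h1 h2
            have hab : a = b := hg a b x h1 h2
            subst hab
            have := ih ha (by rw [hb]) (by omega)
            simpa [Nat.succ_sub_succ] using this

lemma noCyc_inj (hg : PInj g) {v : V} (hv : ¬ OnCyc g v) {i j : ℕ} {x : V}
    (h1 : it g i v = some x) (h2 : it g j v = some x) : i = j := by
  rcases Nat.lt_trichotomy i j with h | h | h
  · exact absurd ⟨j - i, by omega, descend hg h1 h2 (le_of_lt h)⟩ hv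
  · exact h
  · exact (hv ⟨i - j, by omega, descend hg h2 h1 (le_of_lt h)⟩).elim

lemma exists_last [Fintype V] (hg : PInj g) {v : V} (hv : ¬ OnCyc g v) :
    ∃ m z, it g m v = some z ∧ g z = none := by
  by_contra hcon
  push_neg at hcon
  -- then it g m v is some for all m
  have hsome : ∀ m, ∃ z, it g m v = some z := by
    intro m
    induction m with
    | zero => exact ⟨v, rfl⟩
    | succ m ih =>
        obtain ⟨z, hz⟩ := ih
        cases hgz : g z with
        | none => exact absurd hgz (hcon m z hz)
        | some y => exact ⟨y, by rw [it_succ, hz]; simpa⟩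
  obtain ⟨i, j, hne, hij⟩ := Finite.exists_ne_map_eq_of_infinite (fun m : ℕ => (hsome m).choose)
  exact hne (noCyc_inj hg hv (hsome i).choose_spec (by rw [hij]; exact (hsome j).choose_spec))

end PFn

/-! ### Flow states -/

structure St (V : Type*) where
  f : V → Option V
  D : Set V

namespace St

def usedOut (σ : St V) (v : V) : Prop := σ.f v ≠ none
def usedIn (σ : St V) (v : V) : Prop := ∃ x, σ.f x = some v
def fused (σ : St V) (v : V) : Prop := σ.usedIn v ∨ σ.usedOut v
def usedD (σ : St V) (v : V) : Prop := σ.fused v ∨ v ∈ σ.D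
def source (σ : St V) (v : V) : Prop := σ.usedOut v ∧ ¬ σ.usedIn v
def sink (σ : St V) (v : V) : Prop := σ.usedIn v ∧ ¬ σ.usedOut v

lemma usedOut_iff {σ : St V} {v : V} : σ.usedOut v ↔ ∃ y, σ.f v = some y := by
  unfold usedOut; cases h : σ.f v <;> simp [h]

end St

def sinks (σ : St V) : Set V := {v | σ.sink v}

noncomputable def value (σ : St V) : ℕ := (sinks σ).ncard + σ.D.ncard

variable (G : SimpleGraph V) (U W : Set V)

structure Valid (σ : St V) : Prop where
  adj : ∀ ⦃x y⦄, σ.f x = some y → G.Adj x y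
  inj : PInj σ.f
  src : ∀ ⦃v⦄, σ.source v → v ∈ U
  snk : ∀ ⦃v⦄, σ.sink v → v ∈ W
  DUW : σ.D ⊆ U ∩ W
  Dun : ∀ ⦃v⦄, v ∈ σ.D → ¬ σ.fused v

variable {G U W}

/-! ### pred -/

noncomputable def pred (σ : St V) : V → Option V :=
  fun v => if h : ∃ x, σ.f x = some v then some h.choose else none

lemma pred_spec {σ : St V} {v p : V} (h : pred σ v = some p) : σ.f p = some v := by
  unfold pred at h
  split at h
  · rename_i hex; cases h; exact hex.choose_spec
  · exact absurd h (by simp)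

lemma pred_eq_some {σ : St V} (hinj : PInj σ.f) {v p : V} (h : σ.f p = some v) :
    pred σ v = some p := by
  unfold pred
  split
  · rename_i hex; exact congrArg some (hinj _ _ _ hex.choose_spec h)
  · rename_i hex; exact absurd ⟨p, h⟩ hex

lemma pred_none {σ : St V} {v : V} : pred σ v = none ↔ ¬ σ.usedIn v := by
  unfold pred St.usedIn
  split <;> rename_i hex <;> simp [hex]

lemma pred_isSome {σ : St V} {v : V} (h : σ.usedIn v) : ∃ p, pred σ v = some p := by
  cases hp : pred σ v with
  | none => exact absurd h (pred_none.mp hp)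
  | some p => exact ⟨p, rfl⟩

lemma pred_pinj {σ : St V} : PInj (pred σ) := by
  intro a b x ha hb
  have ha' := pred_spec ha
  have hb' := pred_spec hb
  rw [ha'] at hb'; exact Option.some_inj.mp hb'

lemma it_pred_fused {σ : St V} {w x : V} {j : ℕ} (hw : σ.usedIn w)
    (h : it (pred σ) j w = some x) : σ.fused x := by
  cases j with
  | zero => simp [it] at h; subst h; exact Or.inl hw
  | succ j =>
      obtain ⟨y, _, hy⟩ := it_succ_elim h
      exact Or.inr (St.usedOut_iff.mpr ⟨y, pred_spec hy⟩)

lemma onCyc_pred_usedOut {σ : St V} {v : V} (h : OnCyc (pred σ) v) : σ.usedOut v := by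
  obtain ⟨m, hm, hit⟩ := h
  obtain ⟨m', rfl⟩ : ∃ m', m = m' + 1 := ⟨m - 1, by omega⟩
  obtain ⟨y, _, hy⟩ := it_succ_elim hit
  exact St.usedOut_iff.mpr ⟨y, pred_spec hy⟩

lemma onCyc_f_usedIn {σ : St V} {v : V} (h : OnCyc σ.f v) : σ.usedIn v := by
  obtain ⟨m, hm, hit⟩ := h
  obtain ⟨m', rfl⟩ : ∃ m', m = m' + 1 := ⟨m - 1, by omega⟩
  obtain ⟨y, _, hy⟩ := it_succ_elim hit
  exact ⟨y, hy⟩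

lemma onCyc_f_usedOut {σ : St V} {v : V} (h : OnCyc σ.f v) : σ.usedOut v := by
  obtain ⟨y, hy, _⟩ := onCyc_out h
  exact St.usedOut_iff.mpr ⟨y, hy⟩

lemma it_f_to_pred {σ : St V} (hinj : PInj σ.f) {v x : V} {i : ℕ}
    (h : it σ.f i v = some x) : it (pred σ) i x = some v := by
  induction i generalizing x with
  | zero => simp [it] at h ⊢; exact h.symm
  | succ i ih =>
      obtain ⟨y, h1, h2⟩ := it_succ_elim h
      exact it_succ_intro' (pred_eq_some hinj h2) (ih h1)

lemma it_pred_to_f {σ : St V} {w v : V} {i : ℕ}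
    (h : it (pred σ) i w = some v) : it σ.f i v = some w := by
  induction i generalizing v with
  | zero => simp [it] at h ⊢; exact h.symm
  | succ i ih =>
      obtain ⟨y, h1, h2⟩ := it_succ_elim h
      exact it_succ_intro' (pred_spec h2) (ih h1)

/-! ### Residual arcs and reachability -/

variable (G U)

inductive RArc (G : SimpleGraph V) (σ : St V) : V × Bool → V × Bool → Prop
  | fwd (v : V) : ¬ σ.usedD v → RArc G σ (v, false) (v, true)
  | rev (v : V) : σ.fused v → RArc G σ (v, true) (v, false)
  | edge {x y : V} : G.Adj x y → RArc G σ (x, true) (y, false)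
  | rflow {x y : V} : σ.f x = some y → RArc G σ (y, false) (x, true)

def Reach (G : SimpleGraph V) (σ : St V) (U : Set V) (z : V × Bool) : Prop :=
  ∃ u ∈ U, Relation.ReflTransGen (RArc G σ) (u, false) z

variable {G U}

lemma Reach.head {σ : St V} {u : V} (hu : u ∈ U) : Reach G σ U (u, false) :=
  ⟨u, hu, .refl⟩

lemma Reach.step {σ : St V} {z z' : V × Bool} (h : Reach G σ U z) (ha : RArc G σ z z') :
    Reach G σ U z' :=
  let ⟨u, hu, hr⟩ := h; ⟨u, hu, hr.tail ha⟩

lemma arc_into_out {σ : St V} {z : V × Bool} {v : V} (h : RArc G σ z (v, true)) :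
    (z = (v, false) ∧ ¬ σ.usedD v) ∨ ∃ y, σ.f v = some y ∧ z = (y, false) := by
  cases h with
  | fwd _ h => exact Or.inl ⟨rfl, h⟩
  | rflow h => exact Or.inr ⟨_, h, rfl⟩

lemma arc_into_in {σ : St V} {z : V × Bool} {v : V} (h : RArc G σ z (v, false)) :
    (z = (v, true) ∧ σ.fused v) ∨ ∃ x, G.Adj x v ∧ z = (x, true) := by
  cases h with
  | rev _ h => exact Or.inl ⟨rfl, h⟩
  | edge h => exact Or.inr ⟨_, h, rfl⟩

lemma reach_out_not_sink {σ : St V} (hval : Valid G U W σ) {w : V}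
    (h : Reach G σ U (w, true)) : ¬ σ.sink w ∧ w ∉ σ.D := by
  obtain ⟨u, hu, hr⟩ := h
  rcases hr.cases_tail with heq | ⟨c, _, harc⟩
  · simp at heq
  · rcases arc_into_out harc with ⟨_, hnd⟩ | ⟨y, hy, _⟩
    · exact ⟨fun hs => hnd (Or.inl (Or.inl hs.1)), fun hd => hnd (Or.inr hd)⟩
    · have hout : σ.usedOut w := St.usedOut_iff.mpr ⟨y, hy⟩
      exact ⟨fun hs => hs.2 hout, fun hd => hval.Dun hd (Or.inr hout)⟩

lemma chain_reach_back {σ : St V} (n : ℕ) : ∀ y v : V, it σ.f (n+1) y = some v →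
    Reach G σ U (v, false) → Reach G σ U (y, true) := by
  induction n with
  | zero =>
      intro y v h hr
      rw [it_one] at h
      exact hr.step (.rflow h)
  | succ n ih =>
      intro y v h hr
      obtain ⟨u', h1, h2⟩ := it_succ_elim h
      have hru : Reach G σ U (u', true) := hr.step (.rflow h2)
      have : Reach G σ U (u', false) :=
        hru.step (.rev _ (Or.inr (St.usedOut_iff.mpr ⟨v, h2⟩)))
      exact ih y u' h1 this

lemma onCyc_reach {σ : St V} {v : V} (h : OnCyc σ.f v) (hr : Reach G σ U (v, false)) :
    Reach G σ U (v, true) := by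
  obtain ⟨m, hm, hit⟩ := h
  obtain ⟨n, rfl⟩ : ∃ n, m = n + 1 := ⟨m - 1, by omega⟩
  exact chain_reach_back n v v hit hr

/-! ### Trails -/

lemma walk_of_chain {σ : St V} {H : SimpleGraph V}
    (hadj : ∀ ⦃x y⦄, σ.f x = some y → H.Adj x y)
    {i : ℕ} {w v : V} (h : it (pred σ) i w = some v) :
    ∃ p : H.Walk v w, ∀ x, x ∈ p.support ↔ ∃ j ≤ i, it (pred σ) j w = some x := by
  induction i generalizing v with
  | zero =>
      simp [it] at h; subst h
      exact ⟨.nil, fun x => by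
        simp only [SimpleGraph.Walk.support_nil, List.mem_singleton]
        constructor
        · rintro rfl; exact ⟨0, le_refl _, rfl⟩
        · rintro ⟨j, hj, hx⟩; interval_cases j; simp [it] at hx; exact hx.symm⟩
  | succ i ih =>
      obtain ⟨y, h1, h2⟩ := it_succ_elim h
      obtain ⟨q, hq⟩ := ih h1
      refine ⟨.cons (hadj (pred_spec h2)) q, fun x => ?_⟩
      simp only [SimpleGraph.Walk.support_cons, List.mem_cons]
      constructor
      · rintro (rfl | hx)
        · exact ⟨i + 1, le_refl _, h⟩
        · obtain ⟨j, hj, hx⟩ := (hq x).mp hx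
          exact ⟨j, Nat.le_succ_of_le hj, hx⟩
      · rintro ⟨j, hj, hx⟩
        rcases Nat.lt_or_ge j (i+1) with hlt | hge
        · exact Or.inr ((hq x).mpr ⟨j, by omega, hx⟩)
        · have : j = i + 1 := by omega
          subst this
          rw [h] at hx
          exact Or.inl (Option.some_inj.mp hx).symm

lemma chain_stops {σ : St V} {m j : ℕ} {w z : V} (hm : it (pred σ) m w = some z)
    (hz : pred σ z = none) (hj : m < j) : it (pred σ) j w = none := by
  obtain ⟨t, rfl⟩ : ∃ t, j = m + (t + 1) := ⟨j - m - 1, by omega⟩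
  rw [it_add, hm]
  simp only [Option.bind_some]
  rw [it_succ', hz]; rfl

lemma sink_trail [Fintype V] {σ : St V} (hval : Valid G U W σ) {H : SimpleGraph V}
    (hadj : ∀ ⦃x y⦄, σ.f x = some y → H.Adj x y) {w : V} (hw : σ.sink w) :
    ∃ (z : V) (p : H.Walk z w), z ∈ U ∧
      (∀ x, x ∈ p.support ↔ ∃ j, it (pred σ) j w = some x) := by
  have hnc : ¬ OnCyc (pred σ) w := fun h => hw.2 (onCyc_pred_usedOut h)
  obtain ⟨m, z, hm, hz⟩ := exists_last pred_pinj hnc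
  obtain ⟨p, hp⟩ := walk_of_chain hadj hm
  obtain ⟨m', rfl⟩ : ∃ m', m = m' + 1 := by
    rcases Nat.eq_zero_or_pos m with rfl | hpos
    · simp [it] at hm; subst hm
      exact absurd (pred_none.mp hz) (fun h => h hw.1)
    · exact ⟨m - 1, by omega⟩
  have hzU : z ∈ U := by
    obtain ⟨y, _, h2⟩ := it_succ_elim hm
    exact hval.src ⟨St.usedOut_iff.mpr ⟨y, pred_spec h2⟩, pred_none.mp hz⟩
  refine ⟨z, p, hzU, fun x => ?_⟩
  rw [hp x]
  constructor
  · rintro ⟨j, _, hx⟩; exact ⟨j, hx⟩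
  · rintro ⟨j, hx⟩
    refine ⟨j, ?_, hx⟩
    by_contra hj
    rw [chain_stops hm hz (by omega)] at hx
    exact nomatch hx

lemma sink_chain_end {σ : St V} {a b : ℕ} {v w w' : V} (h1 : it σ.f a v = some w)
    (hw : σ.sink w) (h2 : it σ.f (a + b) v = some w') : w = w' := by
  have : it σ.f (a + b) v = (it σ.f a v).bind (fun x => it σ.f b x) := it_add a b v
  rw [h1] at this
  simp only [Option.bind_some] at this
  rw [h2] at this
  cases b with
  | zero => simp [it] at this; exact this.symm
  | succ b =>
      exfalso
      obtain ⟨y, hy, _⟩ := it_succ_elim' this.symm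
      exact hw.2 (St.usedOut_iff.mpr ⟨y, hy⟩)

lemma trail_disjoint {σ : St V} {w w' x : V} (hw : σ.sink w) (hw' : σ.sink w')
    {i j : ℕ} (h1 : it (pred σ) i w = some x) (h2 : it (pred σ) j w' = some x) :
    w = w' := by
  have hf1 : it σ.f i x = some w := it_pred_to_f h1
  have hf2 : it σ.f j x = some w' := it_pred_to_f h2
  rcases le_total i j with hle | hle
  · exact sink_chain_end hf1 hw (by rw [show i + (j - i) = j by omega]; exact hf2)
  · exact (sink_chain_end hf2 hw' (by rw [show j + (i - j) = i by omega]; exact hf1)).symm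

lemma fused_mem_trail [Fintype V] {σ : St V} (hinj : PInj σ.f)
    (hnc : ∀ x, ¬ OnCyc σ.f x) {a : V} (ha : σ.fused a) :
    ∃ w i, σ.sink w ∧ it (pred σ) i w = some a := by
  by_cases hout : σ.usedOut a
  · obtain ⟨m, z, hm, hz⟩ := exists_last hinj (hnc a)
    refine ⟨z, m, ⟨?_, by simp [St.usedOut, hz]⟩, it_f_to_pred hinj hm⟩
    obtain ⟨m', rfl⟩ : ∃ m', m = m' + 1 := by
      rcases Nat.eq_zero_or_pos m with rfl | hpos
      · simp [it] at hm; subst hm; exact absurd hz hout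
      · exact ⟨m - 1, by omega⟩
    obtain ⟨y, _, h2⟩ := it_succ_elim hm
    exact ⟨y, h2⟩
  · rcases ha with hin | hout'
    · exact ⟨a, 0, ⟨hin, hout⟩, rfl⟩
    · exact absurd hout' hout

/-! ### value bounds -/

lemma sinks_disj_D {σ : St V} (hval : Valid G U W σ) : Disjoint (sinks σ) σ.D := by
  rw [Set.disjoint_left]
  intro v hv hD
  exact hval.Dun hD (Or.inl hv.1)

lemma sinks_union_D_subset {σ : St V} (hval : Valid G U W σ) : sinks σ ∪ σ.D ⊆ W :=
  Set.union_subset (fun v hv => hval.snk hv) (fun v hv => (hval.DUW hv).2)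

lemma value_eq_ncard_union [Fintype V] {σ : St V} (hval : Valid G U W σ) :
    value σ = (sinks σ ∪ σ.D).ncard := by
  rw [Set.ncard_union_eq (sinks_disj_D hval) (Set.toFinite _) (Set.toFinite _)]; rfl

lemma value_le [Fintype V] {σ : St V} (hval : Valid G U W σ) : value σ ≤ W.ncard := by
  rw [value_eq_ncard_union hval]
  exact Set.ncard_le_ncard (sinks_union_D_subset hval) (Set.toFinite _)

lemma sinks_union_D_eq [Fintype V] {σ : St V} (hval : Valid G U W σ)
    (hv : value σ = W.ncard) : sinks σ ∪ σ.D = W := by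
  refine Set.eq_of_subset_of_ncard_le (sinks_union_D_subset hval) ?_ (Set.toFinite _)
  rw [← value_eq_ncard_union hval, hv]

/-! ### prune -/

noncomputable def prune (σ : St V) : St V := ⟨fun x => if OnCyc σ.f x then none else σ.f x, σ.D⟩

lemma prune_f_le {σ : St V} {x y : V} (h : (prune σ).f x = some y) : σ.f x = some y := by
  unfold prune at h
  dsimp at h
  split at h
  · exact nomatch h
  · exact h

lemma prune_usedOut {σ : St V} {v : V} :
    (prune σ).usedOut v ↔ σ.usedOut v ∧ ¬ OnCyc σ.f v := by
  unfold St.usedOut prune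
  dsimp
  split <;> rename_i h <;> simp [h]

lemma prune_usedIn {σ : St V} (hinj : PInj σ.f) {v : V} :
    (prune σ).usedIn v ↔ σ.usedIn v ∧ ¬ OnCyc σ.f v := by
  constructor
  · rintro ⟨x, hx⟩
    have hfx := prune_f_le hx
    have hnx : ¬ OnCyc σ.f x := by
      intro hcyc
      unfold prune at hx; dsimp at hx; rw [if_pos hcyc] at hx; exact nomatch hx
    refine ⟨⟨x, hfx⟩, fun hcyc => ?_⟩
    -- v on cycle: its cycle predecessor equals x, contradiction
    obtain ⟨m, hm, hit⟩ := hcyc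
    obtain ⟨m', rfl⟩ : ∃ m', m = m' + 1 := ⟨m - 1, by omega⟩
    obtain ⟨y, h1, h2⟩ := it_succ_elim hit
    have : y = x := hinj _ _ _ h2 hfx
    subst this
    exact hnx (onCyc_of_mem_cycle ⟨m' + 1, by omega, hit⟩ h1)
  · rintro ⟨⟨x, hx⟩, hnc⟩
    refine ⟨x, ?_⟩
    have hnx : ¬ OnCyc σ.f x := by
      intro hcyc
      obtain ⟨y, hy, hcy⟩ := onCyc_out hcyc
      rw [hx] at hy
      exact hnc ((Option.some_inj.mp hy) ▸ hcy)
    unfold prune; dsimp; rw [if_neg hnx]; exact hx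

lemma prune_sink_iff {σ : St V} (hinj : PInj σ.f) {v : V} :
    (prune σ).sink v ↔ σ.sink v := by
  unfold St.sink
  rw [prune_usedIn hinj, prune_usedOut]
  constructor
  · rintro ⟨⟨hin, hnc⟩, hout⟩
    exact ⟨hin, fun h => hout ⟨h, hnc⟩⟩
  · rintro ⟨hin, hout⟩
    have hnc : ¬ OnCyc σ.f v := fun h => hout (onCyc_f_usedOut h)
    exact ⟨⟨hin, hnc⟩, fun h => hout h.1⟩

lemma prune_sinks {σ : St V} (hinj : PInj σ.f) : sinks (prune σ) = sinks σ :=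
  Set.ext fun _ => prune_sink_iff hinj

lemma prune_valid {σ : St V} (hval : Valid G U W σ) : Valid G U W (prune σ) := by
  refine ⟨fun x y h => hval.adj (prune_f_le h), fun a b x ha hb => hval.inj _ _ _ (prune_f_le ha) (prune_f_le hb), ?_, ?_, hval.DUW, ?_⟩
  · rintro v ⟨hout, hnin⟩
    rw [prune_usedOut] at hout
    refine hval.src ⟨hout.1, fun hin => hnin ?_⟩
    exact (prune_usedIn hval.inj).mpr ⟨hin, hout.2⟩
  · intro v hv
    exact hval.snk ((prune_sink_iff hval.inj).mp hv)
  · intro v hD hf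
    refine hval.Dun hD ?_
    rcases hf with hin | hout
    · exact Or.inl ((prune_usedIn hval.inj).mp hin).1
    · exact Or.inr (prune_usedOut.mp hout).1

lemma prune_noCyc {σ : St V} : ∀ v, ¬ OnCyc (prune σ).f v := by
  intro v hcyc
  have hle : ∀ m x y, it (prune σ).f m x = some y → it σ.f m x = some y := by
    intro m
    induction m with
    | zero => intro x y h; exact h
    | succ m ih =>
        intro x y h
        obtain ⟨z, h1, h2⟩ := it_succ_elim h
        exact it_succ_intro (ih _ _ h1) (prune_f_le h2)
  have hcyc' : OnCyc σ.f v := by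
    obtain ⟨m, hm, hit⟩ := hcyc
    exact ⟨m, hm, hle m v v hit⟩
  have := onCyc_f_usedOut hcyc
  unfold St.usedOut prune at this
  dsimp at this
  rw [if_pos hcyc'] at this
  exact this rfl

lemma prune_value {σ : St V} (hinj : PInj σ.f) : value (prune σ) = value σ := by
  unfold value
  rw [prune_sinks hinj]; rfl

/-! ### The frontier cut -/

def frontier (G : SimpleGraph V) (σ : St V) (U : Set V) : Set V :=
  {v | Reach G σ U (v, false) ∧ ¬ Reach G σ U (v, true)}

lemma frontier_usedD {σ : St V} {v : V} (h : v ∈ frontier G σ U) : σ.usedD v := by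
  by_contra hd
  exact h.2 (h.1.step (.fwd v hd))

lemma walk_reach {σ : St V} {a b : V} (p : G.Walk a b)
    (ha : Reach G σ U (a, false)) (hno : ∀ x ∈ p.support, x ∉ frontier G σ U) :
    Reach G σ U (b, false) := by
  induction p with
  | nil => exact ha
  | @cons a c b h q ih =>
      have haf : a ∉ frontier G σ U := hno a (by simp)
      have hat : Reach G σ U (a, true) := by
        by_contra hn
        exact haf ⟨ha, hn⟩
      have hc : Reach G σ U (c, false) := hat.step (.edge h)
      exact ih hc (fun x hx => hno x (by simp [hx]))

lemma frontier_separator {σ : St V}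
    (hW : ∀ w ∈ W, ¬ Reach G σ U (w, true)) :
    IsSeparator G U W (frontier G σ U) := by
  intro a ha b hb p
  by_contra hno
  push_neg at hno
  have := walk_reach p (Reach.head ha) hno
  have hbf : b ∉ frontier G σ U := hno b p.end_mem_support
  exact hW b hb (by by_contra hn; exact hbf ⟨this, hn⟩)

lemma pred_chain_reach {σ : St V} {v : V} (hv : Reach G σ U (v, false)) :
    ∀ t x, it (pred σ) (t+1) v = some x → Reach G σ U (x, true) := by
  intro t
  induction t generalizing v hv with
  | zero =>
      intro x h
      rw [it_one] at h
      exact hv.step (.rflow (pred_spec h))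
  | succ t ih =>
      intro x h
      obtain ⟨y, h1, h2⟩ := it_succ_elim' h
      have hyt : Reach G σ U (y, true) := hv.step (.rflow (pred_spec h1))
      have hyf : Reach G σ U (y, false) :=
        hyt.step (.rev _ (Or.inr (St.usedOut_iff.mpr ⟨v, pred_spec h1⟩)))
      exact ih hyf x h2

lemma frontier_le_value [Fintype V] {σ : St V} (hval : Valid G U W σ) :
    (frontier G σ U).ncard ≤ value σ := by
  classical
  set φ : V → V := fun v =>
    if h : ∃ z, (∃ m, it σ.f m v = some z) ∧ σ.f z = none then h.choose else v with hφ
  have hDcase : ∀ v ∈ frontier G σ U, v ∈ σ.D → φ v = v := by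
    intro v _ hD
    have hnf : ¬ σ.fused v := hval.Dun hD
    have hfv : σ.f v = none := by
      cases hfv : σ.f v with
      | none => rfl
      | some y => exact absurd (Or.inr (by simp [St.usedOut, hfv])) hnf
    have hex : ∃ z, (∃ m, it σ.f m v = some z) ∧ σ.f z = none := ⟨v, ⟨0, rfl⟩, hfv⟩
    simp only [hφ, dif_pos hex]
    -- the chosen z must be v since the chain dies immediately
    obtain ⟨⟨m, hm⟩, _⟩ := hex.choose_spec
    cases m with
    | zero => simpa [it] using hm.symm
    | succ m =>
        exfalso
        obtain ⟨y, h1, h2⟩ := it_succ_elim hm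
        cases m with
        | zero => simp [it] at h1; subst h1; rw [hfv] at h2; exact nomatch h2
        | succ m =>
            obtain ⟨y', h1', h2'⟩ := it_succ_elim' h1
            rw [hfv] at h1'; exact nomatch h1'
  have hFcase : ∀ v ∈ frontier G σ U, σ.fused v →
      σ.sink (φ v) ∧ ∃ m, it σ.f m v = some (φ v) := by
    intro v hvf hfus
    have hnc : ¬ OnCyc σ.f v := fun hc => hvf.2 (onCyc_reach hc hvf.1)
    obtain ⟨m, z, hm, hz⟩ := exists_last hval.inj hnc
    have hex : ∃ z, (∃ m, it σ.f m v = some z) ∧ σ.f z = none := ⟨z, ⟨m, hm⟩, hz⟩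
    simp only [hφ, dif_pos hex]
    obtain ⟨⟨m', hm'⟩, hz'⟩ := hex.choose_spec
    refine ⟨⟨?_, by simp [St.usedOut, hz']⟩, m', hm'⟩
    cases m' with
    | zero =>
        simp [it] at hm'
        rw [← hm'] at hz' ⊢
        rcases hfus with hin | hout
        · exact hin
        · exact absurd hz' hout
    | succ m' =>
        obtain ⟨y, _, h2⟩ := it_succ_elim hm'
        exact ⟨y, h2⟩
  have hmaps : ∀ v ∈ frontier G σ U, φ v ∈ sinks σ ∪ σ.D := by
    intro v hv
    rcases frontier_usedD hv with hfus | hD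
    · exact Or.inl (hFcase v hv hfus).1
    · rw [hDcase v hv hD]; exact Or.inr hD
  have hinj : Set.InjOn φ (frontier G σ U) := by
    intro v hv v' hv' heq
    rcases frontier_usedD hv with hfus | hD
    · rcases frontier_usedD hv' with hfus' | hD'
      · -- both on chains to the same sink
        obtain ⟨hs, m, hm⟩ := hFcase v hv hfus
        obtain ⟨hs', m', hm'⟩ := hFcase v' hv' hfus'
        rw [heq] at hm
        set z := φ v' with hz
        have hp : it (pred σ) m z = some v := it_f_to_pred hval.inj hm
        have hp' : it (pred σ) m' z = some v' := it_f_to_pred hval.inj hm'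
        rcases le_total m m' with hle | hle
        · have : it (pred σ) (m + (m' - m)) z = some v' := by
            rw [show m + (m' - m) = m' by omega]; exact hp'
          rw [it_add, hp] at this
          simp only [Option.bind_some] at this
          rcases Nat.eq_zero_or_pos (m' - m) with h0 | h0
          · rw [h0] at this; simp [it] at this; exact this
          · exfalso
            obtain ⟨t, ht⟩ : ∃ t, m' - m = t + 1 := ⟨m' - m - 1, by omega⟩
            rw [ht] at this
            exact hv'.2 (pred_chain_reach hv.1 t v' this)
        · have : it (pred σ) (m' + (m - m')) z = some v := by
            rw [show m' + (m - m') = m by omega]; exact hp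
          rw [it_add, hp'] at this
          simp only [Option.bind_some] at this
          rcases Nat.eq_zero_or_pos (m - m') with h0 | h0
          · rw [h0] at this; simp [it] at this; exact this.symm
          · exfalso
            obtain ⟨t, ht⟩ : ∃ t, m - m' = t + 1 := ⟨m - m' - 1, by omega⟩
            rw [ht] at this
            exact hv.2 (pred_chain_reach hv'.1 t v this)
      · -- v fused, v' ∈ D : impossible since φ v is a sink but φ v' = v' unfused
        exfalso
        obtain ⟨hs, _⟩ := hFcase v hv hfus
        rw [heq, hDcase v' hv' hD'] at hs
        exact hval.Dun hD' (Or.inl hs.1)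
    · rcases frontier_usedD hv' with hfus' | hD'
      · exfalso
        obtain ⟨hs, _⟩ := hFcase v' hv' hfus'
        rw [← heq, hDcase v hv hD] at hs
        exact hval.Dun hD (Or.inl hs.1)
      · rw [hDcase v hv hD, hDcase v' hv' hD'] at heq; exact heq
  calc (frontier G σ U).ncard ≤ (sinks σ ∪ σ.D).ncard := by
        exact Set.ncard_le_ncard_of_injOn φ hmaps hinj (Set.toFinite _)
    _ = value σ := (value_eq_ncard_union hval).symm

/-! ### Augmentation: helpers -/

structure ValidX (G : SimpleGraph V) (U W : Set V) (σ : St V) (x : V) : Prop where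
  adj : ∀ ⦃a b⦄, σ.f a = some b → G.Adj a b
  inj : PInj σ.f
  src : ∀ ⦃v⦄, σ.source v → v ∈ U
  snkx : ∀ ⦃v⦄, v ≠ x → σ.sink v → v ∈ W
  DUW : σ.D ⊆ U ∩ W
  Dun : ∀ ⦃v⦄, v ∈ σ.D → ¬ σ.fused v
  xout : ¬ σ.usedOut x
  xin : σ.usedIn x ∨ x ∈ U
  xD : x ∉ σ.D

noncomputable def updF (σ : St V) (x : V) (o : Option V) : St V :=
  ⟨Function.update σ.f x o, σ.D⟩

lemma updF_D {σ : St V} {x : V} {o : Option V} : (updF σ x o).D = σ.D := rfl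

lemma updF_at {σ : St V} {x : V} {o : Option V} : (updF σ x o).f x = o := by
  simp [updF]

lemma updF_ne {σ : St V} {x v : V} {o : Option V} (h : v ≠ x) :
    (updF σ x o).f v = σ.f v := by
  simp [updF, Function.update_apply, h]

lemma updF_usedOut_ne {σ : St V} {x v : V} {o : Option V} (h : v ≠ x) :
    ((updF σ x o).usedOut v ↔ σ.usedOut v) := by
  unfold St.usedOut; rw [updF_ne h]

lemma updF_usedIn_some {σ : St V} {x y v : V} (hfx : σ.f x = none) (hy : v ≠ y) :
    ((updF σ x (some y)).usedIn v ↔ σ.usedIn v) := by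
  constructor
  · rintro ⟨a, ha⟩
    by_cases hax : a = x
    · subst hax; rw [updF_at] at ha; exact absurd (Option.some_inj.mp ha).symm hy
    · rw [updF_ne hax] at ha; exact ⟨a, ha⟩
  · rintro ⟨a, ha⟩
    by_cases hax : a = x
    · subst hax; rw [hfx] at ha; exact nomatch ha
    · exact ⟨a, by rw [updF_ne hax]; exact ha⟩

lemma updF_usedIn_self {σ : St V} {x y : V} : (updF σ x (some y)).usedIn y :=
  ⟨x, updF_at⟩

lemma updF_usedIn_none {σ : St V} (hinj : PInj σ.f) {p v : V} {o : V}
    (hp : σ.f p = some o) (hv : v ≠ o) :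
    ((updF σ p none).usedIn v ↔ σ.usedIn v) := by
  constructor
  · rintro ⟨a, ha⟩
    by_cases hap : a = p
    · subst hap; rw [updF_at] at ha; exact nomatch ha
    · rw [updF_ne hap] at ha; exact ⟨a, ha⟩
  · rintro ⟨a, ha⟩
    by_cases hap : a = p
    · subst hap; rw [hp] at ha; exact absurd (Option.some_inj.mp ha) hv.symm
    · exact ⟨a, by rw [updF_ne hap]; exact ha⟩

lemma updF_not_usedIn_none {σ : St V} (hinj : PInj σ.f) {p o : V}
    (hp : σ.f p = some o) : ¬ (updF σ p none).usedIn o := by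
  rintro ⟨a, ha⟩
  by_cases hap : a = p
  · subst hap; rw [updF_at] at ha; exact nomatch ha
  · rw [updF_ne hap] at ha; exact hap (hinj a p o ha hp)

lemma chain_imp_mem {α : Type*} {r r' : α → α → Prop} :
    ∀ {a : α} {l : List α}, List.Chain r a l →
      (∀ p q, p ∈ a :: l → q ∈ l → r p q → r' p q) → List.Chain r' a l := by
  intro a l
  induction l generalizing a with
  | nil => intro _ _; exact List.Chain.nil
  | cons b t ih =>
      intro h H
      unfold List.Chain at h ⊢; rw [List.chain_cons] at h ⊢
      refine ⟨H a b (by simp) (by simp) h.1, ih h.2 fun p q hp hq hr => ?_⟩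
      exact H p q (by simp at hp ⊢; tauto) (by simp [hq]) hr

lemma chain_suffix {α : Type*} {r : α → α → Prop} :
    ∀ {a b : α} {l l₁ l₂ : List α}, List.Chain r a l → l = l₁ ++ b :: l₂ →
      List.Chain r b l₂ := by
  intro a b l l₁
  induction l₁ generalizing a l with
  | nil =>
      intro l₂ h he
      subst he
      exact (List.chain_cons.mp h).2
  | cons c t ih =>
      intro l₂ h he
      subst he
      exact ih (l := t ++ b :: l₂) (List.chain_cons.mp h).2 rfl

/-- if `(v,false)` occurs in the residual path after head `(v,true)`,
then `v` has incoming flow -/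
lemma usedIn_of_ff_mem {σ : St V} {v w0 : V} {l : List (V × Bool)}
    (hch : List.Chain (RArc G σ) (v, true) l)
    (hnd : ((v, true) :: l).Nodup)
    (hlast : ((v, true) :: l).getLast? = some (w0, true))
    (hmem : (v, false) ∈ l) : σ.usedIn v := by
  obtain ⟨l₁, l₂, rfl⟩ := List.append_of_mem hmem
  have hch₂ : List.Chain (RArc G σ) (v, false) l₂ := chain_suffix hch rfl
  cases l₂ with
  | nil =>
      exfalso
      have : ((v, true) :: (l₁ ++ [(v, false)])).getLast? = some (v, false) := by
        rw [← List.cons_append]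
        exact List.getLast?_concat
      rw [this] at hlast
      simp at hlast
  | cons d t =>
      have harc := (List.chain_cons.mp hch₂).1
      cases harc with
      | fwd _ _ =>
          exfalso
          rw [List.nodup_cons] at hnd
          exact hnd.1 (by simp)
      | rflow h => exact ⟨_, h⟩

/-- Base case of augmentation : absorb the unit at `w0`. -/
lemma aug_base [Fintype V] {σ : St V} {w0 : V} (hw0 : w0 ∈ W) (hx : ValidX G U W σ w0) :
    ∃ σ' : St V, Valid G U W σ' ∧
      ({v | σ.sink v ∧ v ≠ w0}.ncard + σ.D.ncard) + 1 ≤ value σ' := by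
  by_cases hin : σ.usedIn w0
  · refine ⟨σ, ⟨hx.adj, hx.inj, hx.src, ?_, hx.DUW, hx.Dun⟩, ?_⟩
    · intro v hv
      by_cases hvx : v = w0
      · subst hvx; exact hw0
      · exact hx.snkx hvx hv
    · have : sinks σ = insert w0 {v | σ.sink v ∧ v ≠ w0} := by
        ext v
        simp only [sinks, Set.mem_setOf_eq, Set.mem_insert_iff]
        constructor
        · intro h; by_cases hvx : v = w0
          · exact Or.inl hvx
          · exact Or.inr ⟨h, hvx⟩
        · rintro (rfl | ⟨h, _⟩)
          · exact ⟨hin, hx.xout⟩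
          · exact h
      unfold value
      rw [this, Set.ncard_insert_of_notMem (by simp) (Set.toFinite _)]
      omega
  · have hU : w0 ∈ U := by rcases hx.xin with h | h; exacts [absurd h hin, h]
    refine ⟨⟨σ.f, insert w0 σ.D⟩, ⟨hx.adj, hx.inj, hx.src, ?_, ?_, ?_⟩, ?_⟩
    · intro v hv
      by_cases hvx : v = w0
      · subst hvx; exact absurd hv.1 hin
      · exact hx.snkx hvx hv
    · rintro v (rfl | hv)
      · exact ⟨hU, hw0⟩
      · exact hx.DUW hv
    · rintro v (rfl | hv) hf
      · rcases hf with h | h; exacts [hin h, hx.xout h]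
      · exact hx.Dun hv hf
    · have hs : sinks (⟨σ.f, insert w0 σ.D⟩ : St V) = {v | σ.sink v ∧ v ≠ w0} := by
        ext v
        simp only [sinks, Set.mem_setOf_eq]
        constructor
        · intro h
          refine ⟨h, ?_⟩
          rintro rfl; exact hin h.1
        · exact fun h => h.1
      unfold value
      rw [hs]
      simp only [updF_D]
      rw [Set.ncard_insert_of_notMem hx.xD (Set.toFinite _)]
      omega

lemma f_none_of_not_usedOut {σ : St V} {v : V} (h : ¬ σ.usedOut v) : σ.f v = none := by
  cases hf : σ.f v with
  | none => rfl
  | some y => exact absurd (by simp [St.usedOut, hf]) h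

lemma sink_mono_ncard [Fintype V] {σ σ' : St V} {x x' : V}
    (h : {v | σ.sink v ∧ v ≠ x} ⊆ {v | σ'.sink v ∧ v ≠ x'}) (hD : σ'.D = σ.D) :
    {v | σ.sink v ∧ v ≠ x}.ncard + σ.D.ncard ≤ {v | σ'.sink v ∧ v ≠ x'}.ncard + σ'.D.ncard := by
  rw [hD]
  exact Nat.add_le_add_right (Set.ncard_le_ncard h (Set.toFinite _)) _

/-- The augmentation recursion: given a residual nodup path from the current
excess position `(x,true)` to `(w0,true)`, we can rearrange the flow to gain one unit. -/
lemma aug_rec [Fintype V] {w0 : V} (hw0 : w0 ∈ W) :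
    ∀ (n : ℕ) (l : List (V × Bool)) (σ : St V) (x : V), l.length ≤ n →
      ValidX G U W σ x →
      List.Chain (RArc G σ) (x, true) l →
      ((x, true) :: l).Nodup →
      ((x, true) :: l).getLast? = some (w0, true) →
      ∃ σ' : St V, Valid G U W σ' ∧
        ({v | σ.sink v ∧ v ≠ x}.ncard + σ.D.ncard) + 1 ≤ value σ' := by
  intro n
  induction n with
  | zero =>
      intro l σ x hlen hx hch hnd hlast
      have hl : l = [] := List.length_eq_zero_iff.mp (by omega)
      subst hl
      have hxw : x = w0 := by
        have : some ((x : V), true) = some ((w0 : V), true) := hlast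
        simpa using this
      subst hxw
      exact aug_base hw0 hx
  | succ n ih =>
      intro l σ x hlen hx hch hnd hlast
      cases l with
      | nil =>
          have hxw : x = w0 := by
            have : some ((x : V), true) = some ((w0 : V), true) := hlast
            simpa using this
          subst hxw
          exact aug_base hw0 hx
      | cons a l' =>
        obtain ⟨harc1, hch1⟩ := List.chain_cons.mp hch
        cases l' with
        | nil =>
            exfalso
            have ha : a = (w0, true) := by
              have : (a :: ([] : List (V × Bool))).getLast? = some (w0, true) := by
                rw [← List.getLast?_cons_cons]; exact hlast
              simpa using this
            subst ha
            cases harc1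
        | cons b l'' =>
          obtain ⟨harc2, hch2⟩ := List.chain_cons.mp hch1
          have hlast2 : (b :: l'').getLast? = some (w0, true) := by
            rw [List.getLast?_cons_cons, List.getLast?_cons_cons] at hlast; exact hlast
          have hlen2 : l''.length ≤ n := by simp at hlen; omega
          have hfx : σ.f x = none := f_none_of_not_usedOut hx.xout
          cases harc1 with
          | rev _ hfus =>
              -- a = (x, false)
              cases harc2 with
              | fwd _ hnD =>
                  -- b = (x, true) : duplicate, contradiction
                  exfalso
                  rw [List.nodup_cons] at hnd
                  exact hnd.1 (by simp)
              | rflow hp =>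
                  -- b = (p, true) with σ.f p = some x : HOP E
                  rename_i p
                  have hpx : p ≠ x := by
                    rintro rfl; exact hx.xout (by simp [St.usedOut, hp])
                  set σ' := updF σ p none with hσ'
                  -- status transfer
                  have hOut : ∀ v, v ≠ p → (σ'.usedOut v ↔ σ.usedOut v) :=
                    fun v hv => updF_usedOut_ne hv
                  have hIn : ∀ v, v ≠ x → (σ'.usedIn v ↔ σ.usedIn v) :=
                    fun v hv => updF_usedIn_none hx.inj hp hv
                  have hInx : ¬ σ'.usedIn x := updF_not_usedIn_none hx.inj hp
                  have hOutp : ¬ σ'.usedOut p := by simp [St.usedOut, hσ', updF_at]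
                  have hfusedle : ∀ v, σ'.fused v → σ.fused v := by
                    rintro v (hin | hout)
                    · by_cases hvx : v = x
                      · exact absurd hin (hvx ▸ hInx)
                      · exact Or.inl ((hIn v hvx).mp hin)
                    · by_cases hvp : v = p
                      · exact absurd hout (hvp ▸ hOutp)
                      · exact Or.inr ((hOut v hvp).mp hout)
                  have hvx' : ValidX G U W σ' p := by
                    refine ⟨?_, ?_, ?_, ?_, hx.DUW, ?_, hOutp, ?_, ?_⟩
                    · intro c d hcd
                      by_cases hcp : c = p
                      · rw [hcp, updF_at] at hcd; exact nomatch hcd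
                      · exact hx.adj (by rwa [updF_ne hcp] at hcd)
                    · intro c d v hc hd
                      by_cases hcp : c = p
                      · rw [hcp, updF_at] at hc; exact nomatch hc
                      · by_cases hdp : d = p
                        · rw [hdp, updF_at] at hd; exact nomatch hd
                        · rw [updF_ne hcp] at hc; rw [updF_ne hdp] at hd
                          exact hx.inj _ _ _ hc hd
                    · rintro v ⟨hout, hnin⟩
                      by_cases hvp : v = p
                      · exact absurd hout (hvp ▸ hOutp)
                      by_cases hvx : v = x
                      · subst hvx
                        exact absurd ((hOut _ hvp).mp hout) hx.xout
                      · exact hx.src ⟨(hOut v hvp).mp hout, fun h => hnin ((hIn v hvx).mpr h)⟩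
                    · rintro v hvp ⟨hin, hnout⟩
                      by_cases hvx : v = x
                      · exact absurd hin (hvx ▸ hInx)
                      · exact hx.snkx hvx ⟨(hIn v hvx).mp hin,
                          fun h => hnout ((hOut v hvp).mpr h)⟩
                    · exact fun v hv hf => hx.Dun hv (hfusedle v hf)
                    · by_cases hup : σ.usedIn p
                      · exact Or.inl ((hIn p hpx).mpr hup)
                      · exact Or.inr (hx.src ⟨St.usedOut_iff.mpr ⟨x, hp⟩, hup⟩)
                    · intro hD
                      exact hx.Dun hD (Or.inr (St.usedOut_iff.mpr ⟨x, hp⟩))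
                  -- nodup bookkeeping
                  have hnd' : ((p, true) :: l'').Nodup := by
                    simp only [List.nodup_cons] at hnd ⊢
                    exact ⟨hnd.2.2.1, hnd.2.2.2⟩
                  have hxtt_not : ((x : V), true) ∉ (p, true) :: l'' := fun hmem =>
                    (List.nodup_cons.mp hnd).1 (List.mem_cons_of_mem _ hmem)
                  have hptt_not : ((p : V), true) ∉ l'' := (List.nodup_cons.mp hnd').1
                  -- chain preservation
                  have hch' : List.Chain (RArc G σ') (p, true) l'' := by
                    refine chain_imp_mem hch2 fun c d hc hd harc => ?_
                    cases harc with
                    | fwd v hnD =>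
                        refine RArc.fwd v fun hD' => hnD ?_
                        rcases hD' with hf | hDD
                        · exact Or.inl (hfusedle v hf)
                        · exact Or.inr hDD
                    | edge h => exact RArc.edge h
                    | rev v hfv =>
                        refine RArc.rev v ?_
                        by_cases hvx : v = x
                        · subst hvx
                          exact absurd hc hxtt_not
                        by_cases hvp : v = p
                        · subst hvp
                          have : σ.usedIn v := usedIn_of_ff_mem hch2 hnd' hlast2 hd
                          exact Or.inl ((hIn v hpx).mpr this)
                        · rcases hfv with hin | hout
                          · exact Or.inl ((hIn v hvx).mpr hin)
                          · exact Or.inr ((hOut v hvp).mpr hout)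
                    | rflow hcd =>
                        rename_i c' d'
                        by_cases hcp : c' = p
                        · exact absurd (hcp ▸ hd) hptt_not
                        · exact RArc.rflow (by rw [updF_ne hcp]; exact hcd)
                  obtain ⟨σ'', hval'', hineq⟩ := ih l'' σ' p hlen2 hvx' hch' hnd' hlast2
                  refine ⟨σ'', hval'', le_trans ?_ hineq⟩
                  have hsub : {v | σ.sink v ∧ v ≠ x} ⊆ {v | σ'.sink v ∧ v ≠ p} := by
                    rintro v ⟨hs, hvx⟩
                    have hvp : v ≠ p := by
                      rintro rfl; exact hs.2 (St.usedOut_iff.mpr ⟨x, hp⟩)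
                    exact ⟨⟨(hIn v hvx).mpr hs.1, fun h => hs.2 ((hOut v hvp).mp h)⟩, hvp⟩
                  exact Nat.add_le_add_right (sink_mono_ncard hsub rfl) 1
          | edge hxy =>
              -- a = (y, false) with G.Adj x y
              rename_i y
              have hyx : y ≠ x := hxy.ne'
              cases harc2 with
              | fwd _ hnD =>
                  -- b = (y, true) : HOP C
                  have hyIn : ¬ σ.usedIn y := fun h => hnD (Or.inl (Or.inl h))
                  have hyOut : ¬ σ.usedOut y := fun h => hnD (Or.inl (Or.inr h))
                  have hyD : y ∉ σ.D := fun h => hnD (Or.inr h)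
                  set σ' := updF σ x (some y) with hσ'
                  have hOut : ∀ v, v ≠ x → (σ'.usedOut v ↔ σ.usedOut v) :=
                    fun v hv => updF_usedOut_ne hv
                  have hOutx : σ'.usedOut x := by simp [St.usedOut, hσ', updF_at]
                  have hIn : ∀ v, v ≠ y → (σ'.usedIn v ↔ σ.usedIn v) :=
                    fun v hv => updF_usedIn_some hfx hv
                  have hIny : σ'.usedIn y := updF_usedIn_self
                  have hfusedge : ∀ v, σ.fused v → σ'.fused v := by
                    rintro v (hin | hout)
                    · by_cases hvy : v = y
                      · exact absurd hin (hvy ▸ hyIn)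
                      · exact Or.inl ((hIn v hvy).mpr hin)
                    · by_cases hvx : v = x
                      · exact absurd hout (hvx ▸ hx.xout)
                      · exact Or.inr ((hOut v hvx).mpr hout)
                  have hvx' : ValidX G U W σ' y := by
                    refine ⟨?_, ?_, ?_, ?_, hx.DUW, ?_, ?_, Or.inl hIny, hyD⟩
                    · intro c d hcd
                      by_cases hcx : c = x
                      · subst hcx; rw [updF_at] at hcd; cases hcd; exact hxy
                      · exact hx.adj (by rwa [updF_ne hcx] at hcd)
                    · intro c d v hc hd
                      by_cases hcx : c = x
                      · subst hcx
                        rw [updF_at] at hc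
                        cases hc
                        by_cases hdx : d = c
                        · exact hdx.symm
                        · rw [updF_ne hdx] at hd
                          exact absurd ⟨d, hd⟩ hyIn
                      · by_cases hdx : d = x
                        · subst hdx
                          rw [updF_at] at hd
                          cases hd
                          rw [updF_ne hcx] at hc
                          exact absurd ⟨c, hc⟩ hyIn
                        · rw [updF_ne hcx] at hc; rw [updF_ne hdx] at hd
                          exact hx.inj _ _ _ hc hd
                    · rintro v ⟨hout, hnin⟩
                      by_cases hvy : v = y
                      · exact absurd hIny (hvy ▸ hnin)
                      by_cases hvx : v = x
                      · subst hvx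
                        rcases hx.xin with h | h
                        · exact absurd ((hIn v (fun hh => hyx hh.symm)).mpr h) hnin
                        · exact h
                      · exact hx.src ⟨(hOut v hvx).mp hout, fun h => hnin ((hIn v hvy).mpr h)⟩
                    · rintro v hvy ⟨hin, hnout⟩
                      by_cases hvx : v = x
                      · exact absurd hOutx (hvx ▸ hnout)
                      · exact hx.snkx hvx ⟨(hIn v hvy).mp hin, fun h => hnout ((hOut v hvx).mpr h)⟩
                    · intro v hv hf
                      rcases hf with hin | hout
                      · by_cases hvy : v = y
                        · exact hyD (hvy ▸ hv)
                        · exact hx.Dun hv (Or.inl ((hIn v hvy).mp hin))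
                      · by_cases hvx : v = x
                        · exact hx.xD (hvx ▸ hv)
                        · exact hx.Dun hv (Or.inr ((hOut v hvx).mp hout))
                    · intro h
                      exact hyOut ((hOut y hyx).mp h)
                  have hnd' : ((y, true) :: l'').Nodup := by
                    simp only [List.nodup_cons] at hnd ⊢
                    exact ⟨hnd.2.2.1, hnd.2.2.2⟩
                  have hxtt_not : ((x : V), true) ∉ (y, true) :: l'' := fun hmem =>
                    (List.nodup_cons.mp hnd).1 (List.mem_cons_of_mem _ hmem)
                  have hyff_not : ((y : V), false) ∉ (y, true) :: l'' := by
                    have := (List.nodup_cons.mp (List.nodup_cons.mp hnd).2).1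
                    exact this
                  have hch' : List.Chain (RArc G σ') (y, true) l'' := by
                    refine chain_imp_mem hch2 fun c d hc hd harc => ?_
                    cases harc with
                    | fwd v hnD2 =>
                        by_cases hvx : v = x
                        · exfalso
                          subst hvx
                          exact hxtt_not (List.mem_cons_of_mem _ hd)
                        by_cases hvy : v = y
                        · exfalso
                          subst hvy
                          exact hyff_not hc
                        · refine RArc.fwd v fun hD' => hnD2 ?_
                          rcases hD' with hf | hDD
                          · rcases hf with hin | hout
                            · exact Or.inl (Or.inl ((hIn v hvy).mp hin))
                            · exact Or.inl (Or.inr ((hOut v hvx).mp hout))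
                          · exact Or.inr hDD
                    | edge h => exact RArc.edge h
                    | rev v hfv => exact RArc.rev v (hfusedge v hfv)
                    | rflow hcd =>
                        rename_i c' d'
                        by_cases hcx : c' = x
                        · exfalso; subst hcx; rw [hfx] at hcd; exact nomatch hcd
                        · exact RArc.rflow (by rw [updF_ne hcx]; exact hcd)
                  obtain ⟨σ'', hval'', hineq⟩ := ih l'' σ' y hlen2 hvx' hch' hnd' hlast2
                  refine ⟨σ'', hval'', le_trans ?_ hineq⟩
                  have hsub : {v | σ.sink v ∧ v ≠ x} ⊆ {v | σ'.sink v ∧ v ≠ y} := by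
                    rintro v ⟨hs, hvx⟩
                    have hvy : v ≠ y := by
                      rintro rfl; exact hyIn hs.1
                    exact ⟨⟨(hIn v hvy).mpr hs.1, fun h => hs.2 ((hOut v hvx).mp h)⟩, hvy⟩
                  exact Nat.add_le_add_right (sink_mono_ncard hsub rfl) 1
              | rflow hp =>
                  -- b = (x₂, true) with σ.f x₂ = some y : HOP D
                  rename_i x₂
                  have hx₂x : x₂ ≠ x := by
                    rintro rfl; exact hx.xout (by simp [St.usedOut, hp])
                  have hyx₂ : y ≠ x₂ := (hx.adj hp).ne'
                  set σ' := updF (updF σ x (some y)) x₂ none with hσ'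
                  have hf'at : σ'.f x = some y := by
                    rw [updF_ne (Ne.symm hx₂x)]; exact updF_at
                  have hf'x₂ : σ'.f x₂ = none := updF_at
                  have hf'ne : ∀ v, v ≠ x → v ≠ x₂ → σ'.f v = σ.f v := by
                    intro v h1 h2
                    rw [updF_ne h2, updF_ne h1]
                  have hOut : ∀ v, v ≠ x → v ≠ x₂ → (σ'.usedOut v ↔ σ.usedOut v) := by
                    intro v h1 h2; unfold St.usedOut; rw [hf'ne v h1 h2]
                  have hOutx : σ'.usedOut x := by simp [St.usedOut, hf'at]
                  have hOutx₂ : ¬ σ'.usedOut x₂ := by simp [St.usedOut, hf'x₂]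
                  have hIn : ∀ v, v ≠ y → (σ'.usedIn v ↔ σ.usedIn v) := by
                    intro v hvy
                    constructor
                    · rintro ⟨c, hc⟩
                      by_cases hcx₂ : c = x₂
                      · subst hcx₂; rw [hf'x₂] at hc; exact nomatch hc
                      by_cases hcx : c = x
                      · subst hcx; rw [hf'at] at hc
                        exact absurd (Option.some_inj.mp hc).symm hvy
                      · exact ⟨c, by rwa [hf'ne c hcx hcx₂] at hc⟩
                    · rintro ⟨c, hc⟩
                      by_cases hcx₂ : c = x₂
                      · subst hcx₂; rw [hp] at hc
                        exact absurd (Option.some_inj.mp hc).symm hvy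
                      by_cases hcx : c = x
                      · subst hcx; rw [hfx] at hc; exact nomatch hc
                      · exact ⟨c, by rwa [hf'ne c hcx hcx₂]⟩
                  have hIny : σ'.usedIn y := ⟨x, hf'at⟩
                  have hvx' : ValidX G U W σ' x₂ := by
                    refine ⟨?_, ?_, ?_, ?_, hx.DUW, ?_, hOutx₂, ?_, ?_⟩
                    · intro c d hcd
                      by_cases hcx₂ : c = x₂
                      · subst hcx₂; rw [hf'x₂] at hcd; exact nomatch hcd
                      by_cases hcx : c = x
                      · subst hcx; rw [hf'at] at hcd; cases hcd; exact hxy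
                      · exact hx.adj (by rwa [hf'ne c hcx hcx₂] at hcd)
                    · intro c d v hc hd
                      by_cases hcx₂ : c = x₂
                      · subst hcx₂; rw [hf'x₂] at hc; exact nomatch hc
                      by_cases hdx₂ : d = x₂
                      · subst hdx₂; rw [hf'x₂] at hd; exact nomatch hd
                      by_cases hcx : c = x
                      · subst hcx
                        rw [hf'at] at hc
                        cases hc
                        by_cases hdx : d = c
                        · exact hdx.symm
                        · rw [hf'ne d hdx hdx₂] at hd
                          exact absurd (hx.inj _ _ _ hd hp) hdx₂
                      · by_cases hdx : d = x
                        · subst hdx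
                          rw [hf'at] at hd
                          cases hd
                          rw [hf'ne c hcx hcx₂] at hc
                          exact absurd (hx.inj _ _ _ hc hp) hcx₂
                        · rw [hf'ne c hcx hcx₂] at hc; rw [hf'ne d hdx hdx₂] at hd
                          exact hx.inj _ _ _ hc hd
                    · rintro v ⟨hout, hnin⟩
                      by_cases hvx₂ : v = x₂
                      · exact absurd hout (hvx₂ ▸ hOutx₂)
                      by_cases hvy : v = y
                      · exact absurd hIny (hvy ▸ hnin)
                      by_cases hvx : v = x
                      · subst hvx
                        rcases hx.xin with h | h
                        · exact absurd ((hIn v (fun hh => hyx hh.symm)).mpr h) hnin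
                        · exact h
                      · exact hx.src ⟨(hOut v hvx hvx₂).mp hout, fun h => hnin ((hIn v hvy).mpr h)⟩
                    · rintro v hvx₂ ⟨hin, hnout⟩
                      by_cases hvx : v = x
                      · exact absurd hOutx (hvx ▸ hnout)
                      by_cases hvy : v = y
                      · subst hvy
                        exact hx.snkx hvx ⟨⟨x₂, hp⟩, fun h => hnout ((hOut v hvx hvx₂).mpr h)⟩
                      · exact hx.snkx hvx ⟨(hIn v hvy).mp hin, fun h => hnout ((hOut v hvx hvx₂).mpr h)⟩
                    · intro v hv hf
                      rcases hf with hin | hout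
                      · by_cases hvy : v = y
                        · exact hx.Dun hv (Or.inl (hvy ▸ ⟨x₂, hp⟩))
                        · exact hx.Dun hv (Or.inl ((hIn v hvy).mp hin))
                      · by_cases hvx : v = x
                        · exact hx.xD (hvx ▸ hv)
                        · by_cases hvx₂ : v = x₂
                          · exact absurd hout (hvx₂ ▸ hOutx₂)
                          · exact hx.Dun hv (Or.inr ((hOut v hvx hvx₂).mp hout))
                    · by_cases hup : σ.usedIn x₂
                      · exact Or.inl ((hIn x₂ (Ne.symm hyx₂)).mpr hup)
                      · exact Or.inr (hx.src ⟨St.usedOut_iff.mpr ⟨y, hp⟩, hup⟩)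
                    · intro hD
                      exact hx.Dun hD (Or.inr (St.usedOut_iff.mpr ⟨y, hp⟩))
                  have hnd' : ((x₂, true) :: l'').Nodup := by
                    simp only [List.nodup_cons] at hnd ⊢
                    exact ⟨hnd.2.2.1, hnd.2.2.2⟩
                  have hxtt_not : ((x : V), true) ∉ (x₂, true) :: l'' := fun hmem =>
                    (List.nodup_cons.mp hnd).1 (List.mem_cons_of_mem _ hmem)
                  have hx₂tt_not : ((x₂ : V), true) ∉ l'' := (List.nodup_cons.mp hnd').1
                  have hyff_not : ((y : V), false) ∉ (x₂, true) :: l'' := by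
                    have := (List.nodup_cons.mp (List.nodup_cons.mp hnd).2).1
                    exact this
                  have hch' : List.Chain (RArc G σ') (x₂, true) l'' := by
                    refine chain_imp_mem hch2 fun c d hc hd harc => ?_
                    cases harc with
                    | fwd v hnD2 =>
                        by_cases hvx : v = x
                        · exfalso; subst hvx
                          exact hxtt_not (List.mem_cons_of_mem _ hd)
                        by_cases hvy : v = y
                        · exfalso; subst hvy
                          exact hnD2 (Or.inl (Or.inl ⟨x₂, hp⟩))
                        by_cases hvx₂ : v = x₂
                        · exfalso; subst hvx₂
                          exact hnD2 (Or.inl (Or.inr (St.usedOut_iff.mpr ⟨y, hp⟩)))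
                        · refine RArc.fwd v fun hD' => hnD2 ?_
                          rcases hD' with hf | hDD
                          · rcases hf with hin | hout
                            · exact Or.inl (Or.inl ((hIn v hvy).mp hin))
                            · exact Or.inl (Or.inr ((hOut v hvx hvx₂).mp hout))
                          · exact Or.inr hDD
                    | edge h => exact RArc.edge h
                    | rev v hfv =>
                        refine RArc.rev v ?_
                        by_cases hvx : v = x
                        · exfalso; subst hvx
                          exact hxtt_not hc
                        by_cases hvy : v = y
                        · exact Or.inl (hvy ▸ hIny)
                        by_cases hvx₂ : v = x₂
                        · subst hvx₂
                          have : σ.usedIn v := usedIn_of_ff_mem hch2 hnd' hlast2 hd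
                          exact Or.inl ((hIn v (Ne.symm hyx₂)).mpr this)
                        · rcases hfv with hin | hout
                          · exact Or.inl ((hIn v hvy).mpr hin)
                          · exact Or.inr ((hOut v hvx hvx₂).mpr hout)
                    | rflow hcd =>
                        rename_i c' d'
                        by_cases hcx₂ : c' = x₂
                        · exact absurd (hcx₂ ▸ hd) hx₂tt_not
                        by_cases hcx : c' = x
                        · exfalso; subst hcx; rw [hfx] at hcd; exact nomatch hcd
                        · exact RArc.rflow (by rw [hf'ne c' hcx hcx₂]; exact hcd)
                  obtain ⟨σ'', hval'', hineq⟩ := ih l'' σ' x₂ hlen2 hvx' hch' hnd' hlast2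
                  refine ⟨σ'', hval'', le_trans ?_ hineq⟩
                  have hsub : {v | σ.sink v ∧ v ≠ x} ⊆ {v | σ'.sink v ∧ v ≠ x₂} := by
                    rintro v ⟨hs, hvx⟩
                    have hvx₂ : v ≠ x₂ := by
                      rintro rfl; exact hs.2 (St.usedOut_iff.mpr ⟨y, hp⟩)
                    by_cases hvy : v = y
                    · exact ⟨⟨hvy ▸ hIny, fun h => hs.2 ((hOut v hvx hvx₂).mp h)⟩, hvx₂⟩
                    · exact ⟨⟨(hIn v hvy).mpr hs.1, fun h => hs.2 ((hOut v hvx hvx₂).mp h)⟩, hvx₂⟩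
                  exact Nat.add_le_add_right (sink_mono_ncard hsub rfl) 1

/-! ### Nodup residual paths, initial augmentation step -/

lemma getLast?_append_cons {α : Type*} (l₁ : List α) (a : α) (l₂ : List α) :
    (l₁ ++ a :: l₂).getLast? = (a :: l₂).getLast? := by
  rw [List.getLast?_append]
  cases h : (a :: l₂).getLast? with
  | none => rw [List.getLast?_eq_none_iff] at h; exact absurd h (by simp)
  | some b => rfl

lemma rtg_nodup_chain {α : Type*} {r : α → α → Prop} {a b : α}
    (h : Relation.ReflTransGen r a b) :
    ∃ l, List.Chain r a l ∧ (a :: l).getLast? = some b ∧ (a :: l).Nodup := by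
  induction h using Relation.ReflTransGen.head_induction_on with
  | refl => exact ⟨[], List.Chain.nil, rfl, List.nodup_cons.mpr ⟨by simp, List.nodup_nil⟩⟩
  | head h' hrtg ih =>
      rename_i a c
      obtain ⟨l, hch, hlast, hnd⟩ := ih
      by_cases hmem : a ∈ c :: l
      · rcases List.mem_cons.mp hmem with rfl | hmem'
        · exact ⟨l, hch, hlast, hnd⟩
        · obtain ⟨l₁, l₂, rfl⟩ := List.append_of_mem hmem'
          refine ⟨l₂, chain_suffix hch rfl, ?_, ?_⟩
          · rw [← hlast]
            have : c :: (l₁ ++ a :: l₂) = (c :: l₁) ++ a :: l₂ := by simp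
            rw [this, getLast?_append_cons]
          · exact List.Nodup.sublist
              (by simpa using List.sublist_append_right (c :: l₁) (a :: l₂)) hnd
      · exact ⟨c :: l, List.chain_cons.mpr ⟨h', hch⟩, by rwa [List.getLast?_cons_cons], List.nodup_cons.mpr ⟨hmem, hnd⟩⟩

lemma valid_to_validX {σ : St V} (hval : Valid G U W σ) {u : V} (hu : u ∈ U)
    (hnD : ¬ σ.usedD u) : ValidX G U W σ u :=
  ⟨hval.adj, hval.inj, hval.src, fun _ _ hv => hval.snk hv, hval.DUW, hval.Dun,
    fun h => hnD (Or.inl (Or.inr h)), Or.inr hu, fun h => hnD (Or.inr h)⟩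

/-- initial augmentation: a residual path from the sources to `(w0,true)` increases the value. -/
lemma aug_init [Fintype V] {σ : St V} (hval : Valid G U W σ) {w0 : V} (hw0 : w0 ∈ W)
    (hr : Reach G σ U (w0, true)) :
    ∃ σ' : St V, Valid G U W σ' ∧ value σ + 1 ≤ value σ' := by
  obtain ⟨u, hu, hrtg⟩ := hr
  obtain ⟨l, hch, hlast, hnd⟩ := rtg_nodup_chain hrtg
  cases l with
  | nil =>
      exfalso
      have : some ((u : V), false) = some ((w0 : V), true) := hlast
      simp at this
  | cons a t =>
      obtain ⟨harc1, hch1⟩ := List.chain_cons.mp hch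
      have hlast1 : (a :: t).getLast? = some (w0, true) := by
        rw [← List.getLast?_cons_cons (a := (u, false))]; exact hlast
      have hnd1 : (a :: t).Nodup := (List.nodup_cons.mp hnd).2
      have huffmem : ((u : V), false) ∉ a :: t := (List.nodup_cons.mp hnd).1
      cases harc1 with
      | fwd _ hnD =>
          -- a = (u, true) : the unit starts fresh at u
          have hx : ValidX G U W σ u := valid_to_validX hval hu hnD
          obtain ⟨σ'', hval'', hineq⟩ :=
            aug_rec hw0 t.length t σ u le_rfl hx hch1 hnd1 hlast1
          refine ⟨σ'', hval'', le_trans ?_ hineq⟩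
          have hsnk : sinks σ = {v | σ.sink v ∧ v ≠ u} := by
            ext v
            simp only [sinks, Set.mem_setOf_eq]
            refine ⟨fun hv => ⟨hv, ?_⟩, fun hv => hv.1⟩
            rintro rfl
            exact hnD (Or.inl (Or.inl hv.1))
          unfold value
          rw [hsnk]
      | rflow hq =>
          -- a = (q, true) with σ.f q = some u
          rename_i q
          have hqu : q ≠ u := (hval.adj hq).ne
          have hInu : ¬ (updF σ q none).usedIn u := updF_not_usedIn_none hval.inj hq
          have hInq : ∀ v, v ≠ u → ((updF σ q none).usedIn v ↔ σ.usedIn v) :=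
            fun v hv => updF_usedIn_none hval.inj hq hv
          have hOut : ∀ v, v ≠ q → ((updF σ q none).usedOut v ↔ σ.usedOut v) :=
            fun v hv => updF_usedOut_ne hv
          have hOutq : ¬ (updF σ q none).usedOut q := by simp [St.usedOut, updF_at]
          have hqtt_not : ((q : V), true) ∉ t := (List.nodup_cons.mp hnd1).1
          -- chain preservation (for both subcases, D is irrelevant to arcs except fwd)
          by_cases huout : σ.usedOut u
          · -- u keeps its outgoing flow and becomes a source
            set σ' := updF σ q none with hσ'
            have hx : ValidX G U W σ' q := by
              refine ⟨?_, ?_, ?_, ?_, hval.DUW, ?_, hOutq, ?_, ?_⟩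
              · intro c d hcd
                by_cases hcq : c = q
                · subst hcq; rw [updF_at] at hcd; exact nomatch hcd
                · exact hval.adj (by rwa [updF_ne hcq] at hcd)
              · intro c d v hc hd
                by_cases hcq : c = q
                · subst hcq; rw [updF_at] at hc; exact nomatch hc
                by_cases hdq : d = q
                · subst hdq; rw [updF_at] at hd; exact nomatch hd
                · rw [updF_ne hcq] at hc; rw [updF_ne hdq] at hd
                  exact hval.inj _ _ _ hc hd
              · rintro v ⟨hout, hnin⟩
                by_cases hvq : v = q
                · exact absurd hout (hvq ▸ hOutq)
                by_cases hvu : v = u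
                · exact hvu ▸ hu
                · exact hval.src ⟨(hOut v hvq).mp hout, fun h => hnin ((hInq v hvu).mpr h)⟩
              · rintro v hvq ⟨hin, hnout⟩
                by_cases hvu : v = u
                · exact absurd hin (hvu ▸ hInu)
                · exact hval.snk ⟨(hInq v hvu).mp hin, fun h => hnout ((hOut v hvq).mpr h)⟩
              · intro v hv hf
                refine hval.Dun hv ?_
                rcases hf with hin | hout
                · by_cases hvu : v = u
                  · exact Or.inl (hvu ▸ ⟨q, hq⟩)
                  · exact Or.inl ((hInq v hvu).mp hin)
                · by_cases hvq : v = q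
                  · exact absurd hout (hvq ▸ hOutq)
                  · exact Or.inr ((hOut v hvq).mp hout)
              · by_cases hiq : σ.usedIn q
                · exact Or.inl ((hInq q hqu).mpr hiq)
                · exact Or.inr (hval.src ⟨St.usedOut_iff.mpr ⟨u, hq⟩, hiq⟩)
              · intro hD
                exact hval.Dun hD (Or.inr (St.usedOut_iff.mpr ⟨u, hq⟩))
            have hch' : List.Chain (RArc G σ') (q, true) t := by
              refine chain_imp_mem hch1 fun c d hc hd harc => ?_
              cases harc with
              | fwd v hnD2 =>
                  refine RArc.fwd v fun hD' => hnD2 ?_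
                  rcases hD' with hf | hDD
                  · rcases hf with hin | hout
                    · by_cases hvu : v = u
                      · exact Or.inl (Or.inl (hvu ▸ ⟨q, hq⟩))
                      · exact Or.inl (Or.inl ((hInq v hvu).mp hin))
                    · by_cases hvq : v = q
                      · exact absurd hout (hvq ▸ hOutq)
                      · exact Or.inl (Or.inr ((hOut v hvq).mp hout))
                  · exact Or.inr hDD
              | edge h => exact RArc.edge h
              | rev v hfv =>
                  refine RArc.rev v ?_
                  by_cases hvq : v = q
                  · subst hvq
                    have : σ.usedIn v := usedIn_of_ff_mem hch1 hnd1 hlast1 hd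
                    exact Or.inl ((hInq v hqu).mpr this)
                  by_cases hvu : v = u
                  · subst hvu
                    exact Or.inr ((hOut v hvq).mpr huout)
                  · rcases hfv with hin | hout
                    · exact Or.inl ((hInq v hvu).mpr hin)
                    · exact Or.inr ((hOut v hvq).mpr hout)
              | rflow hcd =>
                  rename_i c' d'
                  by_cases hcq : c' = q
                  · exact absurd (hcq ▸ hd) hqtt_not
                  · exact RArc.rflow (by rw [updF_ne hcq]; exact hcd)
            obtain ⟨σ'', hval'', hineq⟩ :=
              aug_rec hw0 t.length t σ' q le_rfl hx hch' hnd1 hlast1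
            refine ⟨σ'', hval'', le_trans ?_ hineq⟩
            have hsub : sinks σ ⊆ {v | σ'.sink v ∧ v ≠ q} := by
              rintro v hv
              have hvq : v ≠ q := by
                rintro rfl; exact hv.2 (St.usedOut_iff.mpr ⟨u, hq⟩)
              have hvu : v ≠ u := by
                rintro rfl; exact hv.2 huout
              exact ⟨⟨(hInq v hvu).mpr hv.1, fun h => hv.2 ((hOut v hvq).mp h)⟩, hvq⟩
            have : (sinks σ).ncard ≤ {v | σ'.sink v ∧ v ≠ q}.ncard :=
              Set.ncard_le_ncard hsub (Set.toFinite _)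
            unfold value
            have hD'' : σ'.D.ncard = σ.D.ncard := rfl
            omega
          · -- u was a sink; it moves to D
            have husink : σ.sink u := ⟨⟨q, hq⟩, huout⟩
            set σ' : St V := ⟨(updF σ q none).f, insert u σ.D⟩ with hσ'
            have hf'eq : σ'.f = (updF σ q none).f := rfl
            have hInu' : ¬ σ'.usedIn u := hInu
            have hInq' : ∀ v, v ≠ u → (σ'.usedIn v ↔ σ.usedIn v) := hInq
            have hOut' : ∀ v, v ≠ q → (σ'.usedOut v ↔ σ.usedOut v) := hOut
            have hOutq' : ¬ σ'.usedOut q := hOutq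
            have hx : ValidX G U W σ' q := by
              refine ⟨?_, ?_, ?_, ?_, ?_, ?_, hOutq', ?_, ?_⟩
              · intro c d hcd
                by_cases hcq : c = q
                · subst hcq; rw [hf'eq, updF_at] at hcd; exact nomatch hcd
                · exact hval.adj (by rwa [hf'eq, updF_ne hcq] at hcd)
              · intro c d v hc hd
                by_cases hcq : c = q
                · subst hcq; rw [hf'eq, updF_at] at hc; exact nomatch hc
                by_cases hdq : d = q
                · subst hdq; rw [hf'eq, updF_at] at hd; exact nomatch hd
                · rw [hf'eq, updF_ne hcq] at hc; rw [hf'eq, updF_ne hdq] at hd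
                  exact hval.inj _ _ _ hc hd
              · rintro v ⟨hout, hnin⟩
                by_cases hvq : v = q
                · exact absurd hout (hvq ▸ hOutq')
                by_cases hvu : v = u
                · subst hvu; exact absurd ((hOut' v hvq).mp hout) huout
                · exact hval.src ⟨(hOut' v hvq).mp hout, fun h => hnin ((hInq' v hvu).mpr h)⟩
              · rintro v hvq ⟨hin, hnout⟩
                by_cases hvu : v = u
                · exact absurd hin (hvu ▸ hInu')
                · exact hval.snk ⟨(hInq' v hvu).mp hin, fun h => hnout ((hOut' v hvq).mpr h)⟩
              · rintro v hv
                rcases Set.mem_insert_iff.mp hv with rfl | hvD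
                · exact ⟨hu, hval.snk husink⟩
                · exact hval.DUW hvD
              · rintro v hv hf
                rcases Set.mem_insert_iff.mp hv with rfl | hvD
                · rcases hf with hin | hout
                  · exact hInu' hin
                  · exact huout ((hOut' v (by rintro rfl; exact hOutq' hout)).mp hout)
                · refine hval.Dun hvD ?_
                  rcases hf with hin | hout
                  · by_cases hvu : v = u
                    · exact absurd hin (hvu ▸ hInu')
                    · exact Or.inl ((hInq' v hvu).mp hin)
                  · by_cases hvq : v = q
                    · exact absurd hout (hvq ▸ hOutq')
                    · exact Or.inr ((hOut' v hvq).mp hout)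
              · by_cases hiq : σ.usedIn q
                · exact Or.inl ((hInq' q hqu).mpr hiq)
                · exact Or.inr (hval.src ⟨St.usedOut_iff.mpr ⟨u, hq⟩, hiq⟩)
              · intro hD
                rcases Set.mem_insert_iff.mp hD with h | h
                · exact hqu h
                · exact hval.Dun h (Or.inr (St.usedOut_iff.mpr ⟨u, hq⟩))
            have hch' : List.Chain (RArc G σ') (q, true) t := by
              refine chain_imp_mem hch1 fun c d hc hd harc => ?_
              cases harc with
              | fwd v hnD2 =>
                  by_cases hvu : v = u
                  · exact absurd (Or.inl (Or.inl (hvu ▸ ⟨q, hq⟩))) hnD2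
                  · refine RArc.fwd v fun hD' => hnD2 ?_
                    rcases hD' with hf | hDD
                    · rcases hf with hin | hout
                      · exact Or.inl (Or.inl ((hInq' v hvu).mp hin))
                      · by_cases hvq : v = q
                        · exact absurd hout (hvq ▸ hOutq')
                        · exact Or.inl (Or.inr ((hOut' v hvq).mp hout))
                    · rcases Set.mem_insert_iff.mp hDD with h | h
                      · exact absurd h hvu
                      · exact Or.inr h
              | edge h => exact RArc.edge h
              | rev v hfv =>
                  refine RArc.rev v ?_
                  by_cases hvq : v = q
                  · subst hvq
                    have : σ.usedIn v := usedIn_of_ff_mem hch1 hnd1 hlast1 hd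
                    exact Or.inl ((hInq' v hqu).mpr this)
                  by_cases hvu : v = u
                  · exfalso
                    -- the arc (u,true) → (u,false) would revisit the start
                    subst hvu
                    exact huffmem (List.mem_cons_of_mem _ hd)
                  · rcases hfv with hin | hout
                    · exact Or.inl ((hInq' v hvu).mpr hin)
                    · exact Or.inr ((hOut' v hvq).mpr hout)
              | rflow hcd =>
                  rename_i c' d'
                  by_cases hcq : c' = q
                  · exact absurd (hcq ▸ hd) hqtt_not
                  · exact RArc.rflow (show σ'.f c' = some d' by
                      rw [hf'eq, updF_ne hcq]; exact hcd)
            obtain ⟨σ'', hval'', hineq⟩ :=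
              aug_rec hw0 t.length t σ' q le_rfl hx hch' hnd1 hlast1
            refine ⟨σ'', hval'', le_trans ?_ hineq⟩
            have hsub : sinks σ ⊆ insert u {v | σ'.sink v ∧ v ≠ q} := by
              rintro v hv
              by_cases hvu : v = u
              · exact Or.inl hvu
              · right
                have hvq : v ≠ q := by
                  rintro rfl; exact hv.2 (St.usedOut_iff.mpr ⟨u, hq⟩)
                exact ⟨⟨(hInq' v hvu).mpr hv.1, fun h => hv.2 ((hOut' v hvq).mp h)⟩, hvq⟩
            have h1 : (sinks σ).ncard ≤ {v | σ'.sink v ∧ v ≠ q}.ncard + 1 := by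
              calc (sinks σ).ncard ≤ (insert u {v | σ'.sink v ∧ v ≠ q}).ncard :=
                    Set.ncard_le_ncard hsub (Set.toFinite _)
                _ ≤ {v | σ'.sink v ∧ v ≠ q}.ncard + 1 :=
                    Set.ncard_insert_le _ _
            have h2 : σ'.D.ncard = σ.D.ncard + 1 := by
              have huD : u ∉ σ.D := fun h => hval.Dun h (Or.inl ⟨q, hq⟩)
              exact Set.ncard_insert_of_notMem huD (Set.toFinite _)
            unfold value
            omega

/-! ### Existence of a good state -/

lemma trivial_valid : Valid G U W ⟨fun _ => none, ∅⟩ := by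
  refine ⟨?_, ?_, ?_, ?_, ?_, ?_⟩
  · intro x y h; exact nomatch h
  · intro a b x ha _; exact nomatch ha
  · rintro v ⟨hout, _⟩; exact absurd rfl hout
  · rintro v ⟨⟨x, hx⟩, _⟩; exact nomatch hx
  · simp
  · rintro v hv; exact absurd hv (Set.notMem_empty v)

lemma exists_good_state [Fintype V]
    (hsep2 : ∀ S : Set V, IsSeparator G U W S → W.ncard ≤ S.ncard)
    (hsep3 : ∀ S : Set V, IsSeparator G U W S → S.ncard = W.ncard → S = W) :
    ∃ σ : St V, Valid G U W σ ∧ (∀ v, ¬ OnCyc σ.f v) ∧ sinks σ ∪ σ.D = W ∧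
      ∀ w ∈ W, Reach G σ U (w, false) := by
  obtain ⟨m, ⟨σm, hvm, hm⟩, hmax⟩ :
      ∃ m, (∃ σ, Valid G U W σ ∧ m ≤ value σ) ∧
        ¬(∃ σ, Valid G U W σ ∧ m + 1 ≤ value σ) := by
    by_contra hc
    push_neg at hc
    have hall : ∀ m, ∃ σ, Valid G U W σ ∧ m ≤ value σ := by
      intro m
      induction m with
      | zero => exact ⟨_, trivial_valid, Nat.zero_le _⟩
      | succ m ih => exact hc m ih
    obtain ⟨σ, hv, hge⟩ := hall (W.ncard + 1)
    have := value_le hv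
    omega
  have hnoR : ∀ w ∈ W, ¬ Reach G σm U (w, true) := by
    intro w hw hr
    obtain ⟨σ', hv', hineq⟩ := aug_init hvm hw hr
    exact hmax ⟨σ', hv', by omega⟩
  have hvalm : value σm = W.ncard := by
    have h1 := frontier_le_value hvm
    have h2 := hsep2 _ (frontier_separator hnoR)
    have h3 := value_le hvm
    omega
  set σ := prune σm with hσ
  have hval : Valid G U W σ := prune_valid hvm
  have hnc : ∀ v, ¬ OnCyc σ.f v := prune_noCyc
  have hvv : value σ = W.ncard := by rw [hσ, prune_value hvm.inj]; exact hvalm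
  have hWeq : sinks σ ∪ σ.D = W := sinks_union_D_eq hval hvv
  have hnoR' : ∀ w ∈ W, ¬ Reach G σ U (w, true) := by
    intro w hw hr
    obtain ⟨hns, hnD⟩ := reach_out_not_sink hval hr
    rw [← hWeq] at hw
    rcases hw with h | h
    · exact hns h
    · exact hnD h
  have hfeq : frontier G σ U = W := by
    refine hsep3 _ (frontier_separator hnoR') ?_
    have h1 := frontier_le_value hval
    have h2 := hsep2 _ (frontier_separator hnoR')
    omega
  exact ⟨σ, hval, hnc, hWeq, fun w hw => (hfeq ▸ hw : w ∈ frontier G σ U).1⟩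

/-! ### Sparse certificate edges -/

variable (G U)

noncomputable def Zlv (σ : St V) : ℕ → Set (V × Bool)
  | 0 => {z | ∃ u ∈ U, z = (u, false)}
  | n+1 => Zlv σ n ∪ {z | ∃ p ∈ Zlv σ n, RArc G σ p z}

variable {G U}

lemma Zlv_mono {σ : St V} {m n : ℕ} (h : m ≤ n) : Zlv G U σ m ⊆ Zlv G U σ n := by
  induction n with
  | zero => have : m = 0 := by omega
            subst this; exact subset_rfl
  | succ n ih =>
      rcases Nat.lt_or_ge m (n+1) with hlt | hge
      · exact subset_trans (ih (by omega)) Set.subset_union_left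
      · have : m = n + 1 := by omega
        subst this; exact subset_rfl

lemma reach_Zlv {σ : St V} {z : V × Bool} :
    Reach G σ U z ↔ ∃ n, z ∈ Zlv G U σ n := by
  constructor
  · rintro ⟨u, hu, hrtg⟩
    induction hrtg with
    | refl => exact ⟨0, u, hu, rfl⟩
    | tail _ harc ih =>
        obtain ⟨n, hn⟩ := ih
        exact ⟨n+1, Or.inr ⟨_, hn, harc⟩⟩
  · rintro ⟨n, hn⟩
    induction n generalizing z with
    | zero => obtain ⟨u, hu, rfl⟩ := hn; exact Reach.head hu
    | succ n ih =>
        rcases hn with hn | ⟨p, hp, harc⟩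
        · exact ih hn
        · exact (ih hp).step harc

variable (G U) in
noncomputable def lvl (σ : St V) (z : V × Bool) : ℕ :=
  if h : ∃ n, z ∈ Zlv G U σ n then Nat.find h else 0

variable (G U) in
lemma parent_exists {σ : St V} {z : V × Bool} (hz : ∃ n, z ∈ Zlv G U σ n)
    (h0 : z ∉ Zlv G U σ 0) :
    ∃ p, p ∈ Zlv G U σ (lvl G U σ z - 1) ∧ RArc G σ p z := by
  have hfind : z ∈ Zlv G U σ (Nat.find hz) := Nat.find_spec hz
  have hlvl : lvl G U σ z = Nat.find hz := dif_pos hz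
  have hpos : 0 < Nat.find hz := by
    rcases Nat.eq_zero_or_pos (Nat.find hz) with h | h
    · rw [h] at hfind; exact absurd hfind h0
    · exact h
  obtain ⟨d, hd⟩ : ∃ d, Nat.find hz = d + 1 := ⟨Nat.find hz - 1, by omega⟩
  rw [hd] at hfind
  rcases hfind with hmem | ⟨p, hp, harc⟩
  · exact absurd hmem (Nat.find_min hz (by omega))
  · exact ⟨p, by rw [hlvl, hd]; simpa using hp, harc⟩

variable (G U) in
noncomputable def par (σ : St V) (z : V × Bool) : Option (V × Bool) :=
  if h : (∃ n, z ∈ Zlv G U σ n) ∧ z ∉ Zlv G U σ 0 then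
    some (parent_exists G U h.1 h.2).choose
  else none

lemma par_spec {σ : St V} {z p : V × Bool} (h : par G U σ z = some p) :
    p ∈ Zlv G U σ (lvl G U σ z - 1) ∧ RArc G σ p z := by
  unfold par at h
  split at h
  · rename_i hcond
    cases h
    exact (parent_exists G U hcond.1 hcond.2).choose_spec
  · exact absurd h (by simp)

variable (G U) in
noncomputable def treeE (σ : St V) : Set (Sym2 V) :=
  {e | ∃ v x : V, par G U σ (v, false) = some (x, true) ∧ x ≠ v ∧ e = s(x, v)}

variable (G U) in
noncomputable def Tdom (σ : St V) : Set V :=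
  {v | ∃ x : V, par G U σ (v, false) = some (x, true) ∧ x ≠ v}

lemma treeE_ncard [Fintype V] {σ : St V} :
    (treeE G U σ).ncard ≤ (Tdom G U σ).ncard := by
  classical
  have hsub : treeE G U σ ⊆
      (fun v => match par G U σ (v, false) with
        | some (x, _) => s(x, v)
        | none => s(v, v)) '' (Tdom G U σ) := by
    rintro e ⟨v, x, hp, hne, rfl⟩
    exact ⟨v, ⟨x, hp, hne⟩, by simp only [hp]⟩
  calc (treeE G U σ).ncard ≤ _ := Set.ncard_le_ncard hsub (Set.toFinite _)
    _ ≤ (Tdom G U σ).ncard := Set.ncard_image_le (Set.toFinite _)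

lemma treeE_edge {σ : St V} {e : Sym2 V} (he : e ∈ treeE G U σ) : e ∈ G.edgeSet := by
  obtain ⟨v, x, hp, hne, rfl⟩ := he
  obtain ⟨_, harc⟩ := par_spec hp
  cases harc with
  | rev _ _ => exact absurd rfl hne
  | edge h => exact h

def flowE (σ : St V) : Set (Sym2 V) :=
  {e | ∃ x y : V, σ.f x = some y ∧ e = s(x, y)}

lemma flowE_ncard [Fintype V] {σ : St V} :
    (flowE σ).ncard ≤ {x | σ.usedOut x}.ncard := by
  classical
  have hsub : flowE σ ⊆
      (fun x => s(x, (σ.f x).getD x)) '' {x | σ.usedOut x} := by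
    rintro e ⟨x, y, hf, rfl⟩
    exact ⟨x, St.usedOut_iff.mpr ⟨y, hf⟩, by simp only [hf]; rfl⟩
  calc (flowE σ).ncard ≤ _ := Set.ncard_le_ncard hsub (Set.toFinite _)
    _ ≤ _ := Set.ncard_image_le (Set.toFinite _)

lemma flowE_edge {σ : St V} (hval : Valid G U W σ) {e : Sym2 V}
    (he : e ∈ flowE σ) : e ∈ G.edgeSet := by
  obtain ⟨x, y, hf, rfl⟩ := he
  exact hval.adj hf

/-- the tree reconstructs all residual reachability inside any graph containing
the flow and tree edges -/
lemma rebuild {σ : St V} (H : SimpleGraph V)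
    (hflow : ∀ ⦃x y⦄, σ.f x = some y → H.Adj x y)
    (htree : ∀ ⦃v x : V⦄, par G U σ (v, false) = some (x, true) → x ≠ v → H.Adj x v) :
    ∀ z, Reach G σ U z → Reach H σ U z := by
  have main : ∀ d (z : V × Bool), (∃ n, z ∈ Zlv G U σ n) → lvl G U σ z ≤ d →
      Reach H σ U z := by
    intro d
    induction d with
    | zero =>
        intro z hz hlvl
        have : z ∈ Zlv G U σ 0 := by
          have hfind : z ∈ Zlv G U σ (Nat.find hz) := Nat.find_spec hz
          have : lvl G U σ z = Nat.find hz := dif_pos hz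
          rwa [show Nat.find hz = 0 by omega] at hfind
        obtain ⟨u, hu, rfl⟩ := this
        exact Reach.head hu
    | succ d ih =>
        intro z hz hlvl
        by_cases h0 : z ∈ Zlv G U σ 0
        · obtain ⟨u, hu, rfl⟩ := h0
          exact Reach.head hu
        · obtain ⟨p, hpeq⟩ : ∃ p, par G U σ z = some p := ⟨_, dif_pos ⟨hz, h0⟩⟩
          obtain ⟨hpZ, harc⟩ := par_spec hpeq
          have hpz : ∃ n, p ∈ Zlv G U σ n := ⟨_, hpZ⟩
          have hplvl : lvl G U σ p ≤ lvl G U σ z - 1 := by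
            rw [show lvl G U σ p = Nat.find hpz from dif_pos hpz]
            exact Nat.find_min' hpz hpZ
          have hlvlpos : 1 ≤ lvl G U σ z := by
            by_contra hc
            have : lvl G U σ z = 0 := by omega
            have hfind : z ∈ Zlv G U σ (Nat.find hz) := Nat.find_spec hz
            have heq : lvl G U σ z = Nat.find hz := dif_pos hz
            rw [show Nat.find hz = 0 by omega] at hfind
            exact h0 hfind
          have hreach_p : Reach H σ U p := ih p hpz (by omega)
          cases harc with
          | fwd v h => exact hreach_p.step (RArc.fwd v h)
          | rev v h => exact hreach_p.step (RArc.rev v h)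
          | rflow h => exact hreach_p.step (RArc.rflow h)
          | edge h =>
              rename_i x y
              have hxy : x ≠ y := h.ne
              exact hreach_p.step (RArc.edge (htree hpeq hxy))
  intro z hz
  exact main (lvl G U σ z) z (reach_Zlv.mp hz) le_rfl

/-- reachable nodes are connected to `U` using only flow/tree edges -/
lemma reach_connected {σ : St V} (H : SimpleGraph V)
    (hflow : ∀ ⦃x y⦄, σ.f x = some y → H.Adj x y) :
    ∀ z, Reach H σ U z → ∃ u ∈ U, H.Reachable z.1 u := by
  rintro z ⟨u, hu, hrtg⟩
  induction hrtg with
  | refl => exact ⟨u, hu, SimpleGraph.Reachable.refl u⟩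
  | tail _ harc ih =>
      obtain ⟨u', hu', hr⟩ := ih
      cases harc with
      | fwd v _ => exact ⟨u', hu', hr⟩
      | rev v _ => exact ⟨u', hu', hr⟩
      | edge h =>
          rename_i x y
          exact ⟨u', hu', h.symm.reachable.trans hr⟩
      | rflow h =>
          rename_i x y
          exact ⟨u', hu', (hflow h).reachable.trans hr⟩

/-! ### Forest for global connectivity -/

lemma walk_cross {C : Set V} : ∀ {v u : V}, G.Walk v u → v ∉ C → u ∈ C →
    ∃ a b, G.Adj a b ∧ a ∉ C ∧ b ∈ C := by
  intro v u p
  induction p with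
  | nil => intro hv hu; exact absurd hu hv
  | @cons a c b h q ih =>
      intro hv hu
      by_cases hc : c ∈ C
      · exact ⟨a, c, h, hv, hc⟩
      · exact ih hc hu

lemma forest_lemma [Fintype V] (h4 : ∀ v : V, ∃ u ∈ U, G.Reachable v u) :
    ∀ (n : ℕ) (E0 : Set (Sym2 V)),
      {v : V | ¬ ∃ u ∈ U, (SimpleGraph.fromEdgeSet E0).Reachable v u}.ncard ≤ n →
      ∃ E1 : Set (Sym2 V), E1 ⊆ G.edgeSet ∧ E1.ncard ≤ n ∧
        ∀ v : V, ∃ u ∈ U, (SimpleGraph.fromEdgeSet (E0 ∪ E1)).Reachable v u := by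
  intro n
  induction n with
  | zero =>
      intro E0 hcard
      have hempty : {v : V | ¬ ∃ u ∈ U, (SimpleGraph.fromEdgeSet E0).Reachable v u} = ∅ :=
        (Set.ncard_eq_zero (Set.toFinite _)).mp (by omega)
      refine ⟨∅, by simp, by simp, fun v => ?_⟩
      have hv : v ∉ {v : V | ¬ ∃ u ∈ U, (SimpleGraph.fromEdgeSet E0).Reachable v u} := by
        rw [hempty]; exact Set.notMem_empty v
      simp only [Set.mem_setOf_eq, not_not] at hv
      obtain ⟨u, hu, hr⟩ := hv
      exact ⟨u, hu, hr.mono (SimpleGraph.fromEdgeSet_mono Set.subset_union_left)⟩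
  | succ n ih =>
      intro E0 hcard
      set C : Set V := {v : V | ∃ u ∈ U, (SimpleGraph.fromEdgeSet E0).Reachable v u} with hC
      by_cases hall : ∀ v : V, v ∈ C
      · refine ⟨∅, by simp, by simp, fun v => ?_⟩
        obtain ⟨u, hu, hr⟩ := hall v
        exact ⟨u, hu, hr.mono (SimpleGraph.fromEdgeSet_mono Set.subset_union_left)⟩
      · push_neg at hall
        obtain ⟨v₀, hv₀⟩ := hall
        obtain ⟨u₀, hu₀, hru⟩ := h4 v₀
        have hu₀C : u₀ ∈ C := ⟨u₀, hu₀, SimpleGraph.Reachable.refl u₀⟩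
        obtain ⟨p⟩ := hru
        obtain ⟨a, b, hab, haC, hbC⟩ := walk_cross p hv₀ hu₀C
        set E0' : Set (Sym2 V) := insert s(a, b) E0 with hE0'
        have hmono : SimpleGraph.fromEdgeSet E0 ≤ SimpleGraph.fromEdgeSet E0' :=
          SimpleGraph.fromEdgeSet_mono (Set.subset_insert _ _)
        have haC' : ∃ u ∈ U, (SimpleGraph.fromEdgeSet E0').Reachable a u := by
          obtain ⟨u, hu, hr⟩ := hbC
          refine ⟨u, hu, SimpleGraph.Reachable.trans ?_ (hr.mono hmono)⟩
          exact SimpleGraph.Adj.reachable (by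
            rw [SimpleGraph.fromEdgeSet_adj]
            exact ⟨Set.mem_insert _ _, hab.ne⟩)
        have hsub : {v : V | ¬ ∃ u ∈ U, (SimpleGraph.fromEdgeSet E0').Reachable v u} ⊆
            {v : V | ¬ ∃ u ∈ U, (SimpleGraph.fromEdgeSet E0).Reachable v u} \ {a} := by
          intro v hv
          refine ⟨fun hcon => hv ?_, fun hva => hv (by rw [hva] at *; exact haC')⟩
          obtain ⟨u, hu, hr⟩ := hcon
          exact ⟨u, hu, hr.mono hmono⟩
        have haUn : a ∈ {v : V | ¬ ∃ u ∈ U, (SimpleGraph.fromEdgeSet E0).Reachable v u} := haC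
        have hacard : {v : V | ¬ ∃ u ∈ U, (SimpleGraph.fromEdgeSet E0').Reachable v u}.ncard ≤ n := by
          have h1 : ({v : V | ¬ ∃ u ∈ U, (SimpleGraph.fromEdgeSet E0).Reachable v u} \ {a}).ncard
              < {v : V | ¬ ∃ u ∈ U, (SimpleGraph.fromEdgeSet E0).Reachable v u}.ncard :=
            Set.ncard_diff_singleton_lt_of_mem haUn (Set.toFinite _)
          have h2 := Set.ncard_le_ncard hsub (Set.toFinite _)
          omega
        obtain ⟨E1', hsub1, hcard1, hconn1⟩ := ih E0' hacard
        refine ⟨insert s(a, b) E1', ?_, ?_, ?_⟩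
        · exact Set.insert_subset (G.mem_edgeSet.mpr hab) hsub1
        · calc (insert s(a, b) E1').ncard ≤ E1'.ncard + 1 := Set.ncard_insert_le _ _
            _ ≤ n + 1 := by omega
        · intro v
          obtain ⟨u, hu, hr⟩ := hconn1 v
          refine ⟨u, hu, hr.mono (SimpleGraph.fromEdgeSet_mono ?_)⟩
          rintro e (he | he)
          · rcases Set.mem_insert_iff.mp he with rfl | he
            · exact Or.inr (Set.mem_insert _ _)
            · exact Or.inl he
          · exact Or.inr (Set.mem_insert_of_mem _ he)

/-! ### Trails as supports -/

def sup (σ : St V) (w : V) : Set V := {x | ∃ j, it (pred σ) j w = some x}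

lemma sup_self {σ : St V} {w : V} : w ∈ sup σ w := ⟨0, rfl⟩

lemma sink_chain [Fintype V] {σ : St V} (hval : Valid G U W σ) {w : V} (hw : σ.sink w) :
    ∃ m z, it (pred σ) m w = some z ∧ pred σ z = none ∧ z ∈ U := by
  have hnc : ¬ OnCyc (pred σ) w := fun h => hw.2 (onCyc_pred_usedOut h)
  obtain ⟨m, z, hm, hz⟩ := exists_last pred_pinj hnc
  refine ⟨m, z, hm, hz, ?_⟩
  obtain ⟨m', rfl⟩ : ∃ m', m = m' + 1 := by
    rcases Nat.eq_zero_or_pos m with rfl | hpos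
    · simp [it] at hm; subst hm
      exact absurd (pred_none.mp hz) (fun h => h hw.1)
    · exact ⟨m - 1, by omega⟩
  obtain ⟨y, _, h2⟩ := it_succ_elim hm
  exact hval.src ⟨St.usedOut_iff.mpr ⟨y, pred_spec h2⟩, pred_none.mp hz⟩

lemma sup_of_le {σ : St V} {w z : V} {m : ℕ} (hm : it (pred σ) m w = some z)
    (hz : pred σ z = none) {x : V} :
    x ∈ sup σ w ↔ ∃ j ≤ m, it (pred σ) j w = some x := by
  constructor
  · rintro ⟨j, hj⟩
    refine ⟨j, ?_, hj⟩
    by_contra hc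
    rw [chain_stops hm hz (by omega)] at hj
    exact nomatch hj
  · rintro ⟨j, _, hj⟩; exact ⟨j, hj⟩

lemma D_pred_none {σ : St V} (hval : Valid G U W σ) {w : V} (hw : w ∈ σ.D) :
    pred σ w = none :=
  pred_none.mpr (fun h => hval.Dun hw (Or.inl h))

lemma sup_D {σ : St V} (hval : Valid G U W σ) {w : V} (hw : w ∈ σ.D) :
    sup σ w = {w} := by
  ext x
  constructor
  · rintro ⟨j, hj⟩
    cases j with
    | zero => simpa [it] using hj.symm
    | succ j =>
        obtain ⟨y, h1, h2⟩ := it_succ_elim' hj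
        rw [D_pred_none hval hw] at h1
        exact nomatch h1
  · rintro rfl; exact sup_self

lemma sup_usedD {σ : St V} (hval : Valid G U W σ) (hWeq : sinks σ ∪ σ.D = W)
    {w x : V} (hw : w ∈ W) (hx : x ∈ sup σ w) : σ.usedD x := by
  rw [← hWeq] at hw
  rcases hw with hs | hD
  · obtain ⟨j, hj⟩ := hx
    exact Or.inl (it_pred_fused hs.1 hj)
  · rw [sup_D hval hD] at hx
    rcases hx with rfl
    exact Or.inr hD

lemma sup_disjoint {σ : St V} (hval : Valid G U W σ) (hWeq : sinks σ ∪ σ.D = W)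
    {w w' x : V} (hw : w ∈ W) (hw' : w' ∈ W) (hx : x ∈ sup σ w) (hx' : x ∈ sup σ w') :
    w = w' := by
  rw [← hWeq] at hw hw'
  rcases hw with hs | hD
  · rcases hw' with hs' | hD'
    · obtain ⟨i, hi⟩ := hx
      obtain ⟨j, hj⟩ := hx'
      exact trail_disjoint hs hs' hi hj
    · exfalso
      obtain ⟨i, hi⟩ := hx
      have hfx : σ.fused x := it_pred_fused hs.1 hi
      have hxw : x = w' := by rw [sup_D hval hD'] at hx'; exact hx'
      exact hval.Dun hD' (hxw ▸ hfx)
  · rcases hw' with hs' | hD'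
    · exfalso
      obtain ⟨j, hj⟩ := hx'
      have hfx : σ.fused x := it_pred_fused hs'.1 hj
      have hxw : x = w := by rw [sup_D hval hD] at hx; exact hx
      exact hval.Dun hD (hxw ▸ hfx)
    · have h1 : x = w := by rw [sup_D hval hD] at hx; exact hx
      have h2 : x = w' := by rw [sup_D hval hD'] at hx'; exact hx'
      exact h1.symm.trans h2

lemma trail_walk [Fintype V] {σ : St V} (hval : Valid G U W σ)
    (hWeq : sinks σ ∪ σ.D = W) {H : SimpleGraph V}
    (hflow : ∀ ⦃x y⦄, σ.f x = some y → H.Adj x y) {w : V} (hw : w ∈ W) :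
    ∃ (u : V) (p : H.Walk u w), u ∈ U ∧ ∀ x, x ∈ p.support ↔ x ∈ sup σ w := by
  rw [← hWeq] at hw
  rcases hw with hs | hD
  · obtain ⟨m, z, hm, hz, hzU⟩ := sink_chain hval hs
    obtain ⟨p, hp⟩ := walk_of_chain hflow hm
    exact ⟨z, p, hzU, fun x => by rw [hp x, sup_of_le hm hz]⟩
  · refine ⟨w, SimpleGraph.Walk.nil, (hval.DUW hD).1, fun x => ?_⟩
    rw [sup_D hval hD]
    simp

/-! ### The certificate -/

lemma certificate [Fintype V] {σ : St V} (hval : Valid G U W σ)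
    (hnc : ∀ v, ¬ OnCyc σ.f v) (hWeq : sinks σ ∪ σ.D = W)
    (hreach : ∀ w ∈ W, Reach G σ U (w, false))
    (H : SimpleGraph V)
    (hflow : ∀ ⦃x y⦄, σ.f x = some y → H.Adj x y)
    (htree : ∀ ⦃v x : V⦄, par G U σ (v, false) = some (x, true) → x ≠ v → H.Adj x v) :
    (∀ S : Set V, IsSeparator H U W S → W.ncard ≤ S.ncard) ∧
    (∀ S : Set V, IsSeparator H U W S → S.ncard = W.ncard → S = W) := by
  classical
  -- hit function
  have hhit : ∀ (S : Set V), IsSeparator H U W S → ∀ w ∈ W, ∃ x, x ∈ S ∧ x ∈ sup σ w := by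
    intro S hS w hw
    obtain ⟨u, p, hu, hsup⟩ := trail_walk hval hWeq hflow hw
    obtain ⟨x, hxp, hxS⟩ := hS u hu w hw p
    exact ⟨x, hxS, (hsup x).mp hxp⟩
  have main : ∀ (S : Set V), IsSeparator H U W S →
      ∃ h : V → V, (∀ w ∈ W, h w ∈ S ∧ h w ∈ sup σ w) ∧ Set.InjOn h W := by
    intro S hS
    set h : V → V := fun w => if hw : ∃ x, x ∈ S ∧ x ∈ sup σ w then hw.choose else w with hh
    refine ⟨h, fun w hw => ?_, fun w hw w' hw' heq => ?_⟩
    · have hex := hhit S hS w hw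
      simp only [hh, dif_pos hex]
      exact hex.choose_spec
    · have hex := hhit S hS w hw
      have hex' := hhit S hS w' hw'
      have h1 : h w ∈ sup σ w := by simp only [hh, dif_pos hex]; exact hex.choose_spec.2
      have h2 : h w' ∈ sup σ w' := by simp only [hh, dif_pos hex']; exact hex'.choose_spec.2
      rw [heq] at h1
      exact sup_disjoint hval hWeq hw hw' h1 h2
  constructor
  · intro S hS
    obtain ⟨h, hprop, hinj⟩ := main S hS
    calc W.ncard = (h '' W).ncard := (Set.ncard_image_of_injOn hinj).symm
      _ ≤ S.ncard := Set.ncard_le_ncard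
          (by rintro x ⟨w, hw, rfl⟩; exact (hprop w hw).1) (Set.toFinite _)
  · intro S hS hcard
    by_contra hne
    obtain ⟨h, hprop, hinj⟩ := main S hS
    have himg : h '' W = S := by
      refine Set.eq_of_subset_of_ncard_le
        (by rintro x ⟨w, hw, rfl⟩; exact (hprop w hw).1) ?_ (Set.toFinite _)
      rw [Set.ncard_image_of_injOn hinj, hcard]
    -- a W-vertex outside S
    have hw1 : ∃ w1 ∈ W, w1 ∉ S := by
      by_contra hc
      push_neg at hc
      exact hne (Set.eq_of_subset_of_ncard_le hc (le_of_eq hcard) (Set.toFinite _)).symm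
    obtain ⟨w1, hw1W, hw1S⟩ := hw1
    -- S-hits are unique on each trail
    have huniq : ∀ {x w : V}, w ∈ W → x ∈ S → x ∈ sup σ w → x = h w := by
      intro x w hw hxS hxsup
      rw [← himg] at hxS
      obtain ⟨w₃, hw₃, rfl⟩ := hxS
      have hww : w₃ = w := sup_disjoint hval hWeq hw₃ hw (hprop w₃ hw₃).2 hxsup
      rw [hww]
    set L : Set V := {v | ∃ (u : V) (p : H.Walk u v), u ∈ U ∧ ∀ x ∈ p.support, x ∉ S}
      with hLdef
    have hchain_inj : ∀ {w : V}, w ∈ W → ∀ {i j : ℕ} {x : V},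
        it (pred σ) i w = some x → it (pred σ) j w = some x → i = j := by
      intro w hw i j x hi hj
      have hnc' : ¬ OnCyc (pred σ) w := by
        intro hc
        have hout := onCyc_pred_usedOut hc
        rw [← hWeq] at hw
        rcases hw with hsk | hD
        · exact hsk.2 hout
        · exact hval.Dun hD (Or.inr hout)
      exact noCyc_inj pred_pinj hnc' hi hj
    have hside : ∀ z : V × Bool, Reach H σ U z →
        (z.2 = true → z.1 ∈ L) ∧ (z.2 = false → z.1 ∈ L ∨ z.1 ∈ S) := by
      rintro z ⟨u, hu, hrtg⟩
      induction hrtg with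
      | refl =>
          refine ⟨fun h => by simp at h, fun _ => ?_⟩
          by_cases huS : u ∈ S
          · exact Or.inr huS
          · exact Or.inl ⟨u, SimpleGraph.Walk.nil, hu, by simpa using huS⟩
      | tail hrtg harc ih =>
          cases harc with
          | fwd v hnD =>
              refine ⟨fun _ => ?_, fun h => by simp at h⟩
              rcases (ih.2 rfl) with hvL | hvS
              · exact hvL
              · exfalso
                refine hnD ?_
                rw [← himg] at hvS
                obtain ⟨w₃, hw₃, heq⟩ := hvS
                refine sup_usedD hval hWeq hw₃ ?_
                rw [← show h w₃ = v from heq]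
                exact (hprop w₃ hw₃).2
          | rev v hfus =>
              exact ⟨fun h => by simp at h, fun _ => Or.inl (ih.1 rfl)⟩
          | edge hadj =>
              rename_i x y
              refine ⟨fun h => by simp at h, fun _ => ?_⟩
              have hxL : x ∈ L := ih.1 rfl
              by_cases hyS : y ∈ S
              · exact Or.inr hyS
              · obtain ⟨u', p, hu', hp⟩ := hxL
                refine Or.inl ⟨u', p.concat hadj, hu', fun t ht => ?_⟩
                rw [SimpleGraph.Walk.support_concat] at ht
                rcases by simpa using ht with h | h
                · exact hp t h
                · rcases h with rfl; exact hyS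
          | rflow hab =>
              rename_i a b
              refine ⟨fun _ => ?_, fun h => by simp at h⟩
              have hbside := ih.2 rfl
              have hafused : σ.fused a := Or.inr (St.usedOut_iff.mpr ⟨b, hab⟩)
              obtain ⟨w, i, hwsink, hia⟩ := fused_mem_trail hval.inj hnc hafused
              have hwW : w ∈ W := by rw [← hWeq]; exact Or.inl hwsink
              obtain ⟨i', rfl⟩ : ∃ i', i = i' + 1 := by
                cases i with
                | zero =>
                    exfalso
                    simp [it] at hia
                    exact hwsink.2 (hia ▸ (St.usedOut_iff.mpr ⟨b, hab⟩))
                | succ i' => exact ⟨i', rfl⟩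
              have hib : it (pred σ) i' w = some b := by
                obtain ⟨y, h1, h2⟩ := it_succ_elim hia
                have h3 : σ.f a = some y := pred_spec h2
                rw [hab] at h3
                rwa [show y = b from (Option.some_inj.mp h3).symm] at h1
              obtain ⟨t, hta⟩ := (hprop w hwW).2
              have hhS : h w ∈ S := (hprop w hwW).1
              obtain ⟨m, zsrc, hm, hzn, hzU⟩ := sink_chain hval hwsink
              have hnotS : ∀ {j : ℕ} {x : V}, it (pred σ) j w = some x → j ≠ t → x ∉ S := by
                intro j x hj hjt hxS
                have hxh : x = h w := huniq hwW hxS ⟨j, hj⟩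
                subst hxh
                exact hjt (hchain_inj hwW hj hta)
              have hprefix : ∀ {k : ℕ} {c : V}, it (pred σ) k w = some c → t < k → c ∈ L := by
                intro k c hk ht
                have hkm : k ≤ m := by
                  by_contra hc
                  rw [chain_stops hm hzn (by omega)] at hk
                  exact nomatch hk
                have hck : it (pred σ) (m - k) c = some zsrc := by
                  have h5 := it_add (g := pred σ) k (m - k) w
                  rw [show k + (m - k) = m by omega, hm, hk] at h5
                  simp only [Option.bind_some] at h5
                  exact h5.symm
                obtain ⟨p, hp⟩ := walk_of_chain hflow hck
                refine ⟨zsrc, p, hzU, fun x hx => ?_⟩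
                obtain ⟨j, hj, hjc⟩ := (hp x).mp hx
                exact hnotS (it_trans hk hjc) (by omega)
              rcases hbside with hbL | hbS
              · rcases Nat.lt_trichotomy i' t with hlt | heq | hgt
                · exfalso
                  obtain ⟨q, hq⟩ := walk_of_chain hflow hib
                  obtain ⟨u', p, hu', hp⟩ := hbL
                  obtain ⟨x, hxsup, hxS⟩ := hS u' hu' w hwW (p.append q)
                  rw [SimpleGraph.Walk.mem_support_append_iff] at hxsup
                  rcases hxsup with h | h
                  · exact hp x h hxS
                  · obtain ⟨j, hj, hjc⟩ := (hq x).mp h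
                    exact hnotS hjc (by omega) hxS
                · exfalso
                  have hb : b = h w := by
                    rw [heq] at hib
                    exact (Option.some_inj.mp (hta.symm.trans hib)).symm
                  obtain ⟨u', p, hu', hp⟩ := hbL
                  exact hp b p.end_mem_support (hb ▸ hhS)
                · exact hprefix hia (by omega)
              · have hb : b = h w := huniq hwW hbS ⟨i', hib⟩
                have hit' : i' = t := hchain_inj hwW hib (hb ▸ hta)
                exact hprefix hia (by omega)
    have hw1reach : Reach H σ U (w1, false) := rebuild H hflow htree _ (hreach w1 hw1W)
    rcases (hside _ hw1reach).2 rfl with hw1L | hw1S'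
    · obtain ⟨u', p, hu', hp⟩ := hw1L
      obtain ⟨x, hxsup, hxS⟩ := hS u' hu' w1 hw1W p
      exact hp x hxsup hxS
    · exact hw1S hw1S' 

end Stmt19

theorem stmt19 {V : Type*} [Fintype V] (γ : SimpleGraph V) (U W : Set V)
    (hleft : IsLeftShape γ U W) :
    ∃ Res : Set (Sym2 V), Res ⊆ γ.edgeSet ∧ Res.ncard ≤ 2 * Nat.card V ∧
      ∀ F : Set (Sym2 V), F ⊆ γ.edgeSet \ Res →
        IsLeftShape (γ.deleteEdges F) U W := by
  classical
  obtain ⟨h1, h2, h3, h4⟩ := hleft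
  obtain ⟨σ, hval, hnc, hWeq, hreach⟩ := Stmt19.exists_good_state (G := γ) h2 h3
  set E0 : Set (Sym2 V) := Stmt19.flowE σ ∪ Stmt19.treeE γ U σ with hE0
  obtain ⟨E1, hE1sub, hE1card, hE1conn⟩ :=
    Stmt19.forest_lemma (G := γ) h4
      {v : V | ¬ ∃ u ∈ U, (SimpleGraph.fromEdgeSet E0).Reachable v u}.ncard E0 le_rfl
  have hRessub : E0 ∪ E1 ⊆ γ.edgeSet := by
    rintro e (he | he)
    · rcases he with he | he
      · exact Stmt19.flowE_edge hval he
      · exact Stmt19.treeE_edge he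
    · exact hE1sub he
  -- adjacency facts for the base certificate graph
  have hflow0 : ∀ ⦃x y : V⦄, σ.f x = some y → (SimpleGraph.fromEdgeSet E0).Adj x y := by
    intro x y h
    rw [SimpleGraph.fromEdgeSet_adj]
    exact ⟨Or.inl ⟨x, y, h, rfl⟩, (hval.adj h).ne⟩
  have htree0 : ∀ ⦃v x : V⦄, Stmt19.par γ U σ (v, false) = some (x, true) → x ≠ v →
      (SimpleGraph.fromEdgeSet E0).Adj x v := by
    intro v x hp hne
    rw [SimpleGraph.fromEdgeSet_adj]
    exact ⟨Or.inr ⟨v, x, hp, hne, rfl⟩, hne⟩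
  refine ⟨E0 ∪ E1, hRessub, ?_, ?_⟩
  · -- cardinality bound
    have hV : ∀ s : Set V, s.ncard ≤ Nat.card V := fun s => by
      rw [← Set.ncard_univ]
      exact Set.ncard_le_ncard (Set.subset_univ _) (Set.toFinite _)
    have hflowcard : (Stmt19.flowE σ).ncard ≤ Nat.card V :=
      le_trans Stmt19.flowE_ncard (hV _)
    have hTdomConn : Stmt19.Tdom γ U σ ⊆
        {v : V | ∃ u ∈ U, (SimpleGraph.fromEdgeSet E0).Reachable v u} := by
      rintro v ⟨x, hp, hne⟩
      have hvreach : Stmt19.Reach γ σ U (v, false) := by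
        unfold Stmt19.par at hp
        split at hp
        · rename_i hcond; exact Stmt19.reach_Zlv.mpr hcond.1
        · exact absurd hp (by simp)
      have hH0 : Stmt19.Reach (SimpleGraph.fromEdgeSet E0) σ U (v, false) :=
        Stmt19.rebuild (SimpleGraph.fromEdgeSet E0) hflow0 htree0 _ hvreach
      exact Stmt19.reach_connected (SimpleGraph.fromEdgeSet E0) hflow0 _ hH0
    have hdisj : Disjoint (Stmt19.Tdom γ U σ)
        {v : V | ¬ ∃ u ∈ U, (SimpleGraph.fromEdgeSet E0).Reachable v u} :=
      Set.disjoint_left.mpr (fun v hv hnv => hnv (hTdomConn hv))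
    have htf : (Stmt19.treeE γ U σ).ncard + E1.ncard ≤ Nat.card V := by
      calc (Stmt19.treeE γ U σ).ncard + E1.ncard
          ≤ (Stmt19.Tdom γ U σ).ncard +
            {v : V | ¬ ∃ u ∈ U, (SimpleGraph.fromEdgeSet E0).Reachable v u}.ncard :=
            Nat.add_le_add Stmt19.treeE_ncard hE1card
        _ = (Stmt19.Tdom γ U σ ∪
            {v : V | ¬ ∃ u ∈ U, (SimpleGraph.fromEdgeSet E0).Reachable v u}).ncard :=
            (Set.ncard_union_eq hdisj (Set.toFinite _) (Set.toFinite _)).symm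
        _ ≤ Nat.card V := hV _
    calc (E0 ∪ E1).ncard ≤ E0.ncard + E1.ncard := Set.ncard_union_le _ _
      _ ≤ ((Stmt19.flowE σ).ncard + (Stmt19.treeE γ U σ).ncard) + E1.ncard :=
          Nat.add_le_add_right (Set.ncard_union_le _ _) _
      _ ≤ Nat.card V + Nat.card V := by omega
      _ = 2 * Nat.card V := by omega
  · intro F hF
    set H := γ.deleteEdges F with hHdef
    have hedge : ∀ e ∈ E0 ∪ E1, e ∈ H.edgeSet := by
      intro e he
      rw [hHdef, SimpleGraph.edgeSet_deleteEdges]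
      exact ⟨hRessub he, fun hef => (hF hef).2 he⟩
    have hflowH : ∀ ⦃x y : V⦄, σ.f x = some y → H.Adj x y := by
      intro x y h
      exact H.mem_edgeSet.mp (hedge _ (Or.inl (Or.inl ⟨x, y, h, rfl⟩)))
    have htreeH : ∀ ⦃v x : V⦄, Stmt19.par γ U σ (v, false) = some (x, true) → x ≠ v →
        H.Adj x v := by
      intro v x hp hne
      exact H.mem_edgeSet.mp (hedge _ (Or.inl (Or.inr ⟨v, x, hp, hne, rfl⟩)))
    obtain ⟨c2, c3⟩ := Stmt19.certificate hval hnc hWeq hreach H hflowH htreeH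
    refine ⟨fun a _ b hb p => ⟨b, p.end_mem_support, hb⟩, c2, c3, fun v => ?_⟩
    obtain ⟨u, hu, hr⟩ := hE1conn v
    refine ⟨u, hu, hr.mono ?_⟩
    intro a b hab
    rw [SimpleGraph.fromEdgeSet_adj] at hab
    exact H.mem_edgeSet.mp (hedge _ hab.1)
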